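/- arXiv:2605.13622 — 6 statements merged into one kernel-verified Lean document; each statement's English description precedes it below -/
import Mathlib

section
/- Let n ≥ 2 be an integer. The zero-divisor graph Γ(ℤ/nℤ) is cochordal if and only if n has one of the following forms: n = p^a, n = p^a·q, or n = p·q·r, where p, q, r are distinct primes and a ≥ 1. -/
/-- The set of nonzero zero-divisors of a commutative ring. -/
def nzdSet (R : Type*) [CommRing R] : Set R :=
  {x | x ≠ 0 ∧ ∃ y : R, y ≠ 0 ∧ x * y = 0}

/-- The zero-divisor graph of a commutative ring: vertices are the nonzero
zero-divisors, and distinct vertices are adjacent iff their product is zero. -/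
def zdGraph (R : Type*) [CommRing R] : SimpleGraph (nzdSet R) where
  Adj x y := x ≠ y ∧ (x : R) * (y : R) = 0
  symm := ⟨fun x y h => ⟨h.1.symm, by rw [mul_comm]; exact h.2⟩⟩
  loopless := ⟨fun x h => h.1 rfl⟩

/-- `G` has an induced cycle on `n` vertices: an injection of `ZMod n` into the
vertices such that adjacency holds exactly between cyclically consecutive indices. -/
def HasInducedCycle {V : Type*} (G : SimpleGraph V) (n : ℕ) : Prop :=
  ∃ f : ZMod n → V, Function.Injective f ∧
    ∀ i j : ZMod n, G.Adj (f i) (f j) ↔ (j = i + 1 ∨ i = j + 1)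

/-- A graph is chordal if it has no induced cycle of length at least `4`. -/
def IsChordal {V : Type*} (G : SimpleGraph V) : Prop :=
  ∀ n : ℕ, 4 ≤ n → ¬ HasInducedCycle G n

/-- A graph is cochordal if its complement is chordal. -/
def IsCochordal {V : Type*} (G : SimpleGraph V) : Prop :=
  IsChordal Gᶜ

lemma compl_adj_iff {n : ℕ} [NeZero n] (x y : nzdSet (ZMod n)) :
    (zdGraph (ZMod n))ᶜ.Adj x y ↔ x ≠ y ∧ (x : ZMod n) * (y : ZMod n) ≠ 0 := by
  simp only [SimpleGraph.compl_adj, zdGraph, not_and]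
  constructor
  · rintro ⟨h1, h2⟩; exact ⟨h1, fun h0 => (h2 h1) h0⟩
  · rintro ⟨h1, h2⟩; exact ⟨h1, by tauto⟩

lemma mul_zero_iff_dvd {n : ℕ} [NeZero n] (x y : ZMod n) :
    x * y = 0 ↔ n ∣ x.val * y.val := by
  conv_lhs => rw [← ZMod.natCast_zmod_val x, ← ZMod.natCast_zmod_val y]
  rw [← Nat.cast_mul, ZMod.natCast_eq_zero_iff]

lemma cycle_facts {n m : ℕ} [NeZero n]
    {f : ZMod m → nzdSet (ZMod n)} (hinj : Function.Injective f)
    (hadj : ∀ i j, (zdGraph (ZMod n))ᶜ.Adj (f i) (f j) ↔ (j = i + 1 ∨ i = j + 1)) :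
    (∀ i : ZMod m, ¬ n ∣ ((f i : ZMod n).val * ((f (i+1) : ZMod n)).val)) ∧
    (∀ i j : ZMod m, i ≠ j → j ≠ i + 1 → i ≠ j + 1 →
      n ∣ (f i : ZMod n).val * (f j : ZMod n).val) := by
  constructor
  · intro i hdvd
    have h := (hadj i (i+1)).mpr (Or.inl rfl)
    rw [compl_adj_iff] at h
    exact h.2 ((mul_zero_iff_dvd _ _).mpr hdvd)
  · intro i j hij h1 h2
    have h : ¬ (zdGraph (ZMod n))ᶜ.Adj (f i) (f j) := by
      rw [hadj]; tauto
    rw [compl_adj_iff, not_and] at h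
    have hne : f i ≠ f j := fun h => hij (hinj h)
    have := h hne
    rw [not_not, mul_zero_iff_dvd] at this
    exact this

section idx
variable {m : ℕ}

lemma zmod_cast_ne (hm : 4 ≤ m) (k : ℕ) (h1 : 0 < k) (hk : k < m) :
    ((k : ℕ) : ZMod m) ≠ 0 := by
  intro h
  rw [ZMod.natCast_eq_zero_iff] at h
  exact absurd (Nat.le_of_dvd h1 h) (by omega)

lemma c1 (hm : 4 ≤ m) : ((1:ℕ) : ZMod m) ≠ 0 := zmod_cast_ne hm 1 one_pos (by omega)
lemma c2 (hm : 4 ≤ m) : ((2:ℕ) : ZMod m) ≠ 0 := zmod_cast_ne hm 2 (by norm_num) (by omega)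
lemma c3 (hm : 4 ≤ m) : ((3:ℕ) : ZMod m) ≠ 0 := zmod_cast_ne hm 3 (by norm_num) (by omega)

lemma idx1 (hm : 4 ≤ m) (i : ZMod m) : i ≠ i + 2 := by
  have h := c2 hm; push_cast at h; intro he; exact h (by linear_combination -he)
lemma idx2 (hm : 4 ≤ m) (i : ZMod m) : i + 2 ≠ i + 1 := by
  have h := c1 hm; push_cast at h; intro he; exact h (by linear_combination he)
lemma idx3 (hm : 4 ≤ m) (i : ZMod m) : i ≠ i + 2 + 1 := by
  have h := c3 hm; push_cast at h; intro he; exact h (by linear_combination -he)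
lemma idx4 (hm : 4 ≤ m) (i : ZMod m) : i + 1 ≠ i + 3 := by
  have h := c2 hm; push_cast at h; intro he; exact h (by linear_combination -he)
lemma idx5 (hm : 4 ≤ m) (i : ZMod m) : i + 3 ≠ i + 1 + 1 := by
  have h := c1 hm; push_cast at h; intro he; exact h (by linear_combination he)
lemma idx6 (hm : 4 ≤ m) (i : ZMod m) : i + 1 ≠ i + 3 + 1 := by
  have h := c3 hm; push_cast at h; intro he; exact h (by linear_combination -he)

end idx

lemma pow_dvd_mul_iff_fact {p a x y : ℕ} (hp : p.Prime) (hx : x ≠ 0) (hy : y ≠ 0) :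
    p ^ a ∣ x * y ↔ a ≤ x.factorization p + y.factorization p := by
  rw [hp.pow_dvd_iff_le_factorization (mul_ne_zero hx hy), Nat.factorization_mul hx hy,
    Finsupp.add_apply]

lemma cochordal_prime_pow (p a : ℕ) (hp : p.Prime) (ha : 1 ≤ a) :
    IsCochordal (zdGraph (ZMod (p ^ a))) := by
  have hn1 : 1 < p ^ a := Nat.one_lt_pow (by omega) hp.one_lt
  haveI : NeZero (p ^ a) := ⟨by omega⟩
  intro m hm hcyc
  obtain ⟨f, hinj, hadj⟩ := hcyc
  haveI : NeZero m := ⟨by omega⟩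
  obtain ⟨cons, nonc⟩ := cycle_facts hinj hadj
  set V : ZMod m → ℕ := fun i => (f i : ZMod (p ^ a)).val with hV
  have hV0 : ∀ i, V i ≠ 0 := fun i h => (f i).2.1 ((ZMod.val_eq_zero _).mp h)
  set v : ZMod m → ℕ := fun i => (V i).factorization p with hv
  obtain ⟨i, -, hmin⟩ := Finset.exists_min_image Finset.univ v ⟨0, Finset.mem_univ 0⟩
  have hz : p ^ a ∣ V i * V (i + 2) :=
    nonc i (i + 2) (idx1 hm i) (idx2 hm i) (idx3 hm i)
  rw [pow_dvd_mul_iff_fact hp (hV0 _) (hV0 _)] at hz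
  have h2 : a ≤ (V (i+1)).factorization p + (V (i+2)).factorization p :=
    le_trans hz (by
      have := hmin (i+1) (Finset.mem_univ _)
      simp only [hv] at this ⊢
      omega)
  have := cons (i + 1)
  rw [show i + 1 + 1 = i + 2 by ring] at this
  exact this ((pow_dvd_mul_iff_fact hp (hV0 _) (hV0 _)).mpr h2)

lemma cochordal_pow_mul (p q a : ℕ) (hp : p.Prime) (hq : q.Prime) (hpq : p ≠ q)
    (ha : 1 ≤ a) : IsCochordal (zdGraph (ZMod (p ^ a * q))) := by
  set n := p ^ a * q with hn
  have hpa1 : 1 < p ^ a := Nat.one_lt_pow (by omega) hp.one_lt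
  have hq2 := hq.two_le
  have hn1 : 1 < n := by rw [hn]; nlinarith
  haveI : NeZero n := ⟨by omega⟩
  intro m hm hcyc
  obtain ⟨f, hinj, hadj⟩ := hcyc
  haveI : NeZero m := ⟨by omega⟩
  obtain ⟨cons, nonc⟩ := cycle_facts hinj hadj
  set V : ZMod m → ℕ := fun i => (f i : ZMod n).val with hV
  have hV0 : ∀ i, V i ≠ 0 := fun i h => (f i).2.1 ((ZMod.val_eq_zero _).mp h)
  set v : ZMod m → ℕ := fun i => (V i).factorization p with hv
  have hcop : Nat.Coprime (p ^ a) q := Nat.Coprime.pow_left a ((Nat.coprime_primes hp hq).mpr hpq)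
  have hdvd_iff : ∀ i j : ZMod m, (n ∣ V i * V j ↔
      (a ≤ v i + v j) ∧ (q ∣ V i ∨ q ∣ V j)) := by
    intro i j
    rw [← pow_dvd_mul_iff_fact hp (hV0 i) (hV0 j), ← hq.dvd_mul]
    constructor
    · intro h
      exact ⟨(dvd_mul_right (p ^ a) q).trans h, (dvd_mul_left q (p ^ a)).trans h⟩
    · rintro ⟨h1, h2⟩
      exact hcop.mul_dvd_of_dvd_of_dvd h1 h2
  obtain ⟨i, -, hmin⟩ := Finset.exists_min_image Finset.univ v ⟨0, Finset.mem_univ 0⟩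
  have hz := nonc i (i + 2) (idx1 hm i) (idx2 hm i) (idx3 hm i)
  rw [hdvd_iff] at hz
  have key : ∀ j, a ≤ v j + v (i + 2) := fun j =>
    le_trans hz.1 (by have := hmin j (Finset.mem_univ _); omega)
  have e1 := cons (i + 1)
  rw [show i + 1 + 1 = i + 2 by ring, hdvd_iff] at e1
  have hq1 : ¬ (q ∣ V (i+1) ∨ q ∣ V (i+2)) := fun hor => e1 ⟨key (i+1), hor⟩
  have e2 := cons (i + 2)
  rw [show i + 2 + 1 = i + 3 by ring, hdvd_iff] at e2
  have hq2' : ¬ (q ∣ V (i+2) ∨ q ∣ V (i+3)) := fun hor =>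
    e2 ⟨by have := key (i+3); omega, hor⟩
  have hz2 := nonc (i+1) (i+3) (idx4 hm i) (idx5 hm i) (idx6 hm i)
  rw [hdvd_iff] at hz2
  rcases hz2.2 with h | h
  · exact hq1 (Or.inl h)
  · exact hq2' (Or.inr h)

lemma cochordal_three_primes (p q r : ℕ) (hp : p.Prime) (hq : q.Prime) (hr : r.Prime)
    (hpq : p ≠ q) (hpr : p ≠ r) (hqr : q ≠ r) :
    IsCochordal (zdGraph (ZMod (p * q * r))) := by
  classical
  set n := p * q * r with hn
  have hp2 := hp.two_le; have hq2 := hq.two_le; have hr2 := hr.two_le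
  have hn1 : 1 < n := by rw [hn]; calc 1 < 2*2*2 := by norm_num
                                       _ ≤ p*q*r := by exact Nat.mul_le_mul (Nat.mul_le_mul hp2 hq2) hr2
  haveI : NeZero n := ⟨by omega⟩
  intro m hm hcyc
  obtain ⟨f, hinj, hadj⟩ := hcyc
  haveI : NeZero m := ⟨by omega⟩
  obtain ⟨cons, nonc⟩ := cycle_facts hinj hadj
  set V : ZMod m → ℕ := fun i => (f i : ZMod n).val with hV
  have hsn : ∀ k : Fin 3, ![p,q,r] k ∣ n ∧ (![p,q,r] k).Prime := by
    intro k
    fin_cases k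
    · exact ⟨Dvd.intro _ rfl |>.mul_right r, hp⟩
    · exact ⟨(dvd_mul_left q p).mul_right r, hq⟩
    · exact ⟨dvd_mul_left r (p*q), hr⟩
  have hdvd_iff : ∀ x y : ℕ, (n ∣ x * y ↔ (p ∣ x * y) ∧ (q ∣ x * y) ∧ (r ∣ x * y)) := by
    intro x y
    constructor
    · intro h
      exact ⟨((hsn 0).1).trans h, ((hsn 1).1).trans h, ((hsn 2).1).trans h⟩
    · rintro ⟨h1, h2, h3⟩
      have cpq : Nat.Coprime p q := (Nat.coprime_primes hp hq).mpr hpq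
      have cpr : Nat.Coprime (p*q) r :=
        Nat.Coprime.mul ((Nat.coprime_primes hp hr).mpr hpr) ((Nat.coprime_primes hq hr).mpr hqr)
      exact cpr.mul_dvd_of_dvd_of_dvd (cpq.mul_dvd_of_dvd_of_dvd h1 h2) h3
  have hchoose : ∀ i : ZMod m, ∃ k : Fin 3,
      ¬ (![p,q,r] k ∣ V i) ∧ ¬ (![p,q,r] k ∣ V (i+1)) := by
    intro i
    by_contra hcon
    push_neg at hcon
    apply cons i
    rw [hdvd_iff]
    refine ⟨hp.dvd_mul.mpr ?_, hq.dvd_mul.mpr ?_, hr.dvd_mul.mpr ?_⟩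
    · rcases Classical.em ((![p,q,r] (0:Fin 3)) ∣ V i) with h | h
      · exact Or.inl h
      · exact Or.inr (hcon 0 h)
    · rcases Classical.em ((![p,q,r] (1:Fin 3)) ∣ V i) with h | h
      · exact Or.inl h
      · exact Or.inr (hcon 1 h)
    · rcases Classical.em ((![p,q,r] (2:Fin 3)) ∣ V i) with h | h
      · exact Or.inl h
      · exact Or.inr (hcon 2 h)
  choose g hg1 hg2 using hchoose
  have hcard : Fintype.card (Fin 3) < Fintype.card (ZMod m) := by
    rw [ZMod.card, Fintype.card_fin]; omega
  obtain ⟨i, j, hij, hgij⟩ := Fintype.exists_ne_map_eq_of_card_lt g hcard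
  set s : ℕ := ![p,q,r] (g i) with hs
  have hsprime : s.Prime := (hsn (g i)).2
  have hsdn : s ∣ n := (hsn (g i)).1
  have hi0 : ¬ s ∣ V i := hg1 i
  have hi1 : ¬ s ∣ V (i+1) := hg2 i
  have hj0 : ¬ s ∣ V j := by rw [hs, hgij]; exact hg1 j
  have hj1 : ¬ s ∣ V (j+1) := by rw [hs, hgij]; exact hg2 j
  -- derive contradiction: find nonconsecutive distinct pair both not divisible by s
  have contra : ∀ i' j' : ZMod m, i' ≠ j' → j' ≠ i' + 1 → i' ≠ j' + 1 →
      ¬ s ∣ V i' → ¬ s ∣ V j' → False := by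
    intro i' j' h1 h2 h3 hd1 hd2
    have := nonc i' j' h1 h2 h3
    rcases hsprime.dvd_mul.mp (hsdn.trans this) with h | h
    · exact hd1 h
    · exact hd2 h
  by_cases hc1 : j = i + 1
  · subst hc1
    exact contra i (i + 1 + 1) (by rw [show i+1+1 = i+2 by ring]; exact idx1 hm i)
      (by rw [show i+1+1 = i+2 by ring]; exact idx2 hm i)
      (by rw [show i+1+1 = i+2 by ring]; exact idx3 hm i) hi0 hj1
  · by_cases hc2 : i = j + 1
    · subst hc2
      exact contra j (j + 1 + 1) (by rw [show j+1+1 = j+2 by ring]; exact idx1 hm j)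
        (by rw [show j+1+1 = j+2 by ring]; exact idx2 hm j)
        (by rw [show j+1+1 = j+2 by ring]; exact idx3 hm j) hj0 hi1
    · exact contra i j hij hc1 hc2 hi0 hj0

lemma not_cochordal_of_four {n : ℕ} (hn : 2 ≤ n) (d0 d1 d2 d3 : ℕ)
    (hp0 : 0 < d0) (hp1 : 0 < d1) (hp2 : 0 < d2) (hp3 : 0 < d3)
    (hl0 : d0 < n) (hl1 : d1 < n) (hl2 : d2 < n) (hl3 : d3 < n)
    (hne01 : d0 ≠ d1) (hne02 : d0 ≠ d2) (hne03 : d0 ≠ d3)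
    (hne12 : d1 ≠ d2) (hne13 : d1 ≠ d3) (hne23 : d2 ≠ d3)
    (h02 : n ∣ d0 * d2) (h13 : n ∣ d1 * d3)
    (h01 : ¬ n ∣ d0 * d1) (h12 : ¬ n ∣ d1 * d2) (h23 : ¬ n ∣ d2 * d3)
    (h30 : ¬ n ∣ d3 * d0) :
    ¬ IsCochordal (zdGraph (ZMod n)) := by
  haveI : NeZero n := ⟨by omega⟩
  intro hco
  apply hco 4 le_rfl
  have hnz : ∀ d : ℕ, 0 < d → d < n → ((d : ZMod n) ≠ 0) := by
    intro d h1 h2 h3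
    rw [ZMod.natCast_eq_zero_iff] at h3
    have := Nat.le_of_dvd h1 h3; omega
  have hpz : ∀ d e : ℕ, n ∣ d * e → (d : ZMod n) * (e : ZMod n) = 0 := by
    intro d e h
    rw [← Nat.cast_mul, ZMod.natCast_eq_zero_iff]; exact h
  have hpnz : ∀ d e : ℕ, ¬ n ∣ d * e → (d : ZMod n) * (e : ZMod n) ≠ 0 := by
    intro d e h hc
    rw [← Nat.cast_mul, ZMod.natCast_eq_zero_iff] at hc; exact h hc
  have hcast_inj : ∀ d e : ℕ, d < n → e < n → (d : ZMod n) = (e : ZMod n) → d = e := by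
    intro d e hd he h
    have := congrArg ZMod.val h
    rwa [ZMod.val_cast_of_lt hd, ZMod.val_cast_of_lt he] at this
  let w0 : nzdSet (ZMod n) :=
    ⟨(d0 : ZMod n), hnz _ hp0 hl0, (d2 : ZMod n), hnz _ hp2 hl2, hpz _ _ h02⟩
  let w1 : nzdSet (ZMod n) :=
    ⟨(d1 : ZMod n), hnz _ hp1 hl1, (d3 : ZMod n), hnz _ hp3 hl3, hpz _ _ h13⟩
  let w2 : nzdSet (ZMod n) :=
    ⟨(d2 : ZMod n), hnz _ hp2 hl2, (d0 : ZMod n), hnz _ hp0 hl0,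
      by rw [mul_comm]; exact hpz _ _ h02⟩
  let w3 : nzdSet (ZMod n) :=
    ⟨(d3 : ZMod n), hnz _ hp3 hl3, (d1 : ZMod n), hnz _ hp1 hl1,
      by rw [mul_comm]; exact hpz _ _ h13⟩
  have hwne01 : w0 ≠ w1 := fun h => hne01 (hcast_inj _ _ hl0 hl1 (congrArg Subtype.val h))
  have hwne02 : w0 ≠ w2 := fun h => hne02 (hcast_inj _ _ hl0 hl2 (congrArg Subtype.val h))
  have hwne03 : w0 ≠ w3 := fun h => hne03 (hcast_inj _ _ hl0 hl3 (congrArg Subtype.val h))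
  have hwne12 : w1 ≠ w2 := fun h => hne12 (hcast_inj _ _ hl1 hl2 (congrArg Subtype.val h))
  have hwne13 : w1 ≠ w3 := fun h => hne13 (hcast_inj _ _ hl1 hl3 (congrArg Subtype.val h))
  have hwne23 : w2 ≠ w3 := fun h => hne23 (hcast_inj _ _ hl2 hl3 (congrArg Subtype.val h))
  set G := (zdGraph (ZMod n))ᶜ with hG
  have ha01 : G.Adj w0 w1 := (compl_adj_iff _ _).mpr ⟨hwne01, hpnz _ _ h01⟩
  have ha12 : G.Adj w1 w2 := (compl_adj_iff _ _).mpr ⟨hwne12, hpnz _ _ h12⟩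
  have ha23 : G.Adj w2 w3 := (compl_adj_iff _ _).mpr ⟨hwne23, hpnz _ _ h23⟩
  have ha30 : G.Adj w3 w0 := (compl_adj_iff _ _).mpr ⟨hwne03.symm, by
    show (d3 : ZMod n) * (d0 : ZMod n) ≠ 0
    exact hpnz _ _ h30⟩
  have hna02 : ¬ G.Adj w0 w2 := fun h => ((compl_adj_iff _ _).mp h).2 (hpz _ _ h02)
  have hna13 : ¬ G.Adj w1 w3 := fun h => ((compl_adj_iff _ _).mp h).2 (hpz _ _ h13)
  have h4 : ∀ i : ZMod 4, i = 0 ∨ i = 1 ∨ i = 2 ∨ i = 3 := by decide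
  classical
  let f : ZMod 4 → nzdSet (ZMod n) := fun i =>
    if i = 0 then w0 else if i = 1 then w1 else if i = 2 then w2 else w3
  have e0 : f 0 = w0 := by show (if _ then _ else _) = _; rw [if_pos rfl]
  have e1 : f 1 = w1 := by
    show (if _ then _ else _) = _; rw [if_neg (by decide), if_pos rfl]
  have e2 : f 2 = w2 := by
    show (if _ then _ else _) = _
    rw [if_neg (by decide), if_neg (by decide), if_pos rfl]
  have e3 : f 3 = w3 := by
    show (if _ then _ else _) = _
    rw [if_neg (by decide), if_neg (by decide), if_neg (by decide)]
  refine ⟨f, ?_, ?_⟩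
  · intro x y hxy
    rcases h4 x with rfl | rfl | rfl | rfl <;> rcases h4 y with rfl | rfl | rfl | rfl <;>
      simp only [e0, e1, e2, e3] at hxy <;>
      first
        | rfl
        | exact absurd hxy hwne01 | exact absurd hxy hwne01.symm
        | exact absurd hxy hwne02 | exact absurd hxy hwne02.symm
        | exact absurd hxy hwne03 | exact absurd hxy hwne03.symm
        | exact absurd hxy hwne12 | exact absurd hxy hwne12.symm
        | exact absurd hxy hwne13 | exact absurd hxy hwne13.symm
        | exact absurd hxy hwne23 | exact absurd hxy hwne23.symm
  · intro i j
    rcases h4 i with rfl | rfl | rfl | rfl <;> rcases h4 j with rfl | rfl | rfl | rfl <;>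
      simp only [e0, e1, e2, e3] <;>
      first
        | exact iff_of_false (fun h => h.ne rfl) (by decide)
        | exact iff_of_true ha01 (by decide) | exact iff_of_true ha01.symm (by decide)
        | exact iff_of_true ha12 (by decide) | exact iff_of_true ha12.symm (by decide)
        | exact iff_of_true ha23 (by decide) | exact iff_of_true ha23.symm (by decide)
        | exact iff_of_true ha30 (by decide) | exact iff_of_true ha30.symm (by decide)
        | exact iff_of_false hna02 (by decide)
        | exact iff_of_false (fun h => hna02 h.symm) (by decide)
        | exact iff_of_false hna13 (by decide)
        | exact iff_of_false (fun h => hna13 h.symm) (by decide)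

lemma prime_decomp {n p : ℕ} (hn : n ≠ 0) (hp : p.Prime) :
    ∃ a t, n = p ^ a * t ∧ ¬ p ∣ t ∧ 0 < t ∧ (p ∣ n → 1 ≤ a) ∧ (p ^ 2 ∣ n → 2 ≤ a) := by
  refine ⟨n.factorization p, n / p ^ n.factorization p, ?_, ?_, ?_, ?_, ?_⟩
  · exact (Nat.ordProj_mul_ordCompl_eq_self n p).symm
  · exact Nat.not_dvd_ordCompl hp hn
  · exact Nat.ordCompl_pos p hn
  · intro h
    have := (hp.pow_dvd_iff_le_factorization hn).mp (by rwa [pow_one] : p ^ 1 ∣ n)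
    omega
  · intro h
    exact (hp.pow_dvd_iff_le_factorization hn).mp h

lemma prime_not_dvd_prime_pow {p q : ℕ} (hp : p.Prime) (hq : q.Prime) (hpq : p ≠ q)
    (e : ℕ) : ¬ p ∣ q ^ e :=
  fun h => hpq ((Nat.prime_dvd_prime_iff_eq hp hq).mp (hp.dvd_of_dvd_pow h))

lemma not_dvd_mul {p x y : ℕ} (hp : p.Prime) (hx : ¬ p ∣ x) (hy : ¬ p ∣ y) :
    ¬ p ∣ x * y := fun h => (hp.dvd_mul.mp h).elim hx hy

lemma not_pow_dvd {u e e' M : ℕ} (hu : 2 ≤ u) (hM : ¬ u ∣ M) (he : e' < e) :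
    ¬ u ^ e ∣ u ^ e' * M := by
  intro h
  have h2 : u ^ (e' + 1) ∣ u ^ e' * M := dvd_trans (pow_dvd_pow u (by omega)) h
  rw [pow_succ] at h2
  exact hM ((mul_dvd_mul_iff_left (pow_ne_zero e' (by omega : u ≠ 0))).mp h2)

lemma lt_of_factor {n d e : ℕ} (h : n = d * e) (hd : 0 < d) (he : 1 < e) : d < n := by
  subst h; nlinarith

lemma prime_dvd_transfer {q p a t : ℕ} (hq : q.Prime) (hp : p.Prime) (hqp : q ≠ p)
    (h : q ∣ p ^ a * t) : q ∣ t := by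
  rcases hq.dvd_mul.mp h with h | h
  · exact absurd ((Nat.prime_dvd_prime_iff_eq hq hp).mp (hq.dvd_of_dvd_pow h)) hqp
  · exact h

lemma pow_dvd_transfer {q p a t k : ℕ} (hq : q.Prime) (hp : p.Prime) (hqp : q ≠ p)
    (h : q ^ k ∣ p ^ a * t) : q ^ k ∣ t := by
  have cop : Nat.Coprime (q ^ k) (p ^ a) :=
    ((Nat.coprime_primes hq hp).mpr hqp).pow k a
  exact (Nat.Coprime.dvd_of_dvd_mul_left cop h)

lemma one_lt_pow_aux {p e : ℕ} (hp : 2 ≤ p) (he : 1 ≤ e) : 1 < p ^ e :=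
  Nat.one_lt_pow (by omega) (by omega)

lemma bad_sq_sq {n p q : ℕ} (hn : 2 ≤ n) (hp : p.Prime) (hq : q.Prime) (hpq : p ≠ q)
    (hdvd : p ^ 2 * q ^ 2 ∣ n) : ¬ IsCochordal (zdGraph (ZMod n)) := by
  have hn0 : n ≠ 0 := by omega
  obtain ⟨a, t1, hn1, hpt1, ht1pos, -, ha⟩ := prime_decomp hn0 hp
  have ha2 : 2 ≤ a := ha ((dvd_mul_right _ _).trans hdvd)
  have hq2t1 : q ^ 2 ∣ t1 :=
    pow_dvd_transfer hq hp (Ne.symm hpq) (hn1 ▸ (dvd_mul_left _ _).trans hdvd)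
  obtain ⟨b, t, ht1, hqt, htpos, -, hb'⟩ := prime_decomp (by omega : t1 ≠ 0) hq
  have hb2 : 2 ≤ b := hb' hq2t1
  have hpt : ¬ p ∣ t := fun h => hpt1 (h.trans ⟨q ^ b, by rw [ht1]; ring⟩)
  have hneq : n = p ^ a * (q ^ b * t) := by rw [hn1, ht1]
  have hp2 := hp.two_le; have hq2 := hq.two_le
  have hpa : p ^ (a - 1) * p = p ^ a := by rw [← pow_succ]; congr 1; omega
  have hqb : q ^ (b - 1) * q = q ^ b := by rw [← pow_succ]; congr 1; omega
  have hn_eq : n = (p ^ (a - 1) * q ^ (b - 1) * t) * (p * q) := by rw [hneq, ← hpa, ← hqb]; ring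
  have hpq4 : 4 ≤ p * q := Nat.mul_le_mul hp2 hq2
  have hpd0 : p ∣ (p ^ (a - 1) * q ^ (b - 1) * t) :=
    (dvd_pow_self p (by omega : a - 1 ≠ 0)).trans ⟨q ^ (b-1) * t, by ring⟩
  have hqd0 : q ∣ (p ^ (a - 1) * q ^ (b - 1) * t) :=
    (dvd_pow_self q (by omega : b - 1 ≠ 0)).trans ⟨p ^ (a-1) * t, by ring⟩
  have hpd1 : ¬ p ∣ (q ^ b * t) := not_dvd_mul hp (prime_not_dvd_prime_pow hp hq hpq b) hpt
  have hpd3 : p ∣ (p ^ a) := dvd_pow_self p (by omega : a ≠ 0)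
  have hqd3 : ¬ q ∣ (p ^ a) := prime_not_dvd_prime_pow hq hp (Ne.symm hpq) a
  have hppq1 : ¬ p ∣ (p * q - 1) := by
    intro h
    have h2 : p ∣ p * q - (p * q - 1) := Nat.dvd_sub (dvd_mul_right p q) h
    rw [show p * q - (p * q - 1) = 1 by omega] at h2
    exact absurd (Nat.eq_one_of_dvd_one h2) (by omega)
  have hqpq1 : ¬ q ∣ (p * q - 1) := by
    intro h
    have h2 : q ∣ p * q - (p * q - 1) := Nat.dvd_sub (dvd_mul_left q p) h
    rw [show p * q - (p * q - 1) = 1 by omega] at h2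
    exact absurd (Nat.eq_one_of_dvd_one h2) (by omega)
  have hP0 : 0 < (p ^ (a - 1) * q ^ (b - 1) * t) :=
    Nat.mul_pos (Nat.mul_pos (pow_pos (by omega) _) (pow_pos (by omega) _)) htpos
  have hP1 : 0 < (q ^ b * t) := Nat.mul_pos (pow_pos (by omega) _) htpos
  have hP2 : 0 < ((p ^ (a - 1) * q ^ (b - 1) * t) * (p * q - 1)) := Nat.mul_pos hP0 (by omega)
  have hP3 : 0 < (p ^ a) := pow_pos (by omega) _
  have hL0 : (p ^ (a - 1) * q ^ (b - 1) * t) < n := lt_of_factor hn_eq hP0 (by omega)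
  have hL1 : (q ^ b * t) < n := lt_of_factor (show n = q ^ b * t * p ^ a by rw [hneq]; ring) hP1 (one_lt_pow_aux hp2 (by omega))
  have hL2 : ((p ^ (a - 1) * q ^ (b - 1) * t) * (p * q - 1)) < n := by
    rw [hn_eq]
    exact mul_lt_mul_of_pos_left (by omega) hP0
  have hL3 : (p ^ a) < n := by
    refine lt_of_factor hneq hP3 ?_
    calc 1 < q ^ b := one_lt_pow_aux hq2 (by omega)
    _ ≤ q ^ b * t := Nat.le_mul_of_pos_right _ htpos
  have hN01 : (p ^ (a - 1) * q ^ (b - 1) * t) ≠ (q ^ b * t) := fun h => hpd1 (by rw [← h]; exact hpd0)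
  have hN02 : (p ^ (a - 1) * q ^ (b - 1) * t) ≠ ((p ^ (a - 1) * q ^ (b - 1) * t) * (p * q - 1)) := by
    have h1 : (p ^ (a - 1) * q ^ (b - 1) * t) * 1 < (p ^ (a - 1) * q ^ (b - 1) * t) * (p * q - 1) := mul_lt_mul_of_pos_left (by omega) hP0
    rw [mul_one] at h1
    exact ne_of_lt h1
  have hN03 : (p ^ (a - 1) * q ^ (b - 1) * t) ≠ (p ^ a) := fun h => hqd3 (by rw [← h]; exact hqd0)
  have hN12 : (q ^ b * t) ≠ ((p ^ (a - 1) * q ^ (b - 1) * t) * (p * q - 1)) := fun h => hpd1 (by rw [h]; exact hpd0.trans (dvd_mul_right _ _))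
  have hN13 : (q ^ b * t) ≠ (p ^ a) := fun h => hpd1 (by rw [h]; exact hpd3)
  have hN23 : ((p ^ (a - 1) * q ^ (b - 1) * t) * (p * q - 1)) ≠ (p ^ a) := fun h => hqd3 (by rw [← h]; exact hqd0.trans (dvd_mul_right _ _))
  have hpqd0 : p * q ∣ (p ^ (a - 1) * q ^ (b - 1) * t) :=
    (mul_dvd_mul (dvd_pow_self p (by omega : a - 1 ≠ 0))
      (dvd_pow_self q (by omega : b - 1 ≠ 0))).trans ⟨t, by ring⟩
  have h02 : n ∣ (p ^ (a - 1) * q ^ (b - 1) * t) * ((p ^ (a - 1) * q ^ (b - 1) * t) * (p * q - 1)) := by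
    rw [hn_eq]
    exact mul_dvd_mul_left _ (hpqd0.trans (dvd_mul_right _ _))
  have h13 : n ∣ (q ^ b * t) * (p ^ a) := dvd_of_eq (by rw [hneq]; ring)
  have hpan : p ^ a ∣ n := by rw [hneq]; exact dvd_mul_right _ _
  have hqbn : q ^ b ∣ n := by rw [hneq]; exact ⟨p ^ a * t, by ring⟩
  have h01 : ¬ n ∣ (p ^ (a - 1) * q ^ (b - 1) * t) * (q ^ b * t) := by
    intro h
    have h2 := hpan.trans h
    rw [show (p ^ (a - 1) * q ^ (b - 1) * t) * (q ^ b * t) = p ^ (a-1) * (q ^ (b-1) * t * (q ^ b * t)) by ring] at h2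
    exact not_pow_dvd hp2
      (not_dvd_mul hp (not_dvd_mul hp (prime_not_dvd_prime_pow hp hq hpq _) hpt)
        (not_dvd_mul hp (prime_not_dvd_prime_pow hp hq hpq _) hpt))
      (by omega) h2
  have h12 : ¬ n ∣ (q ^ b * t) * ((p ^ (a - 1) * q ^ (b - 1) * t) * (p * q - 1)) := by
    intro h
    have h2 := hpan.trans h
    rw [show (q ^ b * t) * ((p ^ (a - 1) * q ^ (b - 1) * t) * (p * q - 1)) = p ^ (a-1) * (q ^ b * t * (q ^ (b-1) * t * (p * q - 1)))
      by ring] at h2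
    exact not_pow_dvd hp2
      (not_dvd_mul hp (not_dvd_mul hp (prime_not_dvd_prime_pow hp hq hpq _) hpt)
        (not_dvd_mul hp (not_dvd_mul hp (prime_not_dvd_prime_pow hp hq hpq _) hpt) hppq1))
      (by omega) h2
  have h23 : ¬ n ∣ ((p ^ (a - 1) * q ^ (b - 1) * t) * (p * q - 1)) * (p ^ a) := by
    intro h
    have h2 := hqbn.trans h
    rw [show ((p ^ (a - 1) * q ^ (b - 1) * t) * (p * q - 1)) * (p ^ a) = q ^ (b-1) * (p ^ (a-1) * t * (p * q - 1) * p ^ a)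
      by ring] at h2
    exact not_pow_dvd hq2
      (not_dvd_mul hq
        (not_dvd_mul hq (not_dvd_mul hq (prime_not_dvd_prime_pow hq hp (Ne.symm hpq) _) hqt) hqpq1)
        (prime_not_dvd_prime_pow hq hp (Ne.symm hpq) _))
      (by omega) h2
  have h30 : ¬ n ∣ (p ^ a) * (p ^ (a - 1) * q ^ (b - 1) * t) := by
    intro h
    have h2 := hqbn.trans h
    rw [show (p ^ a) * (p ^ (a - 1) * q ^ (b - 1) * t) = q ^ (b-1) * (p ^ a * (p ^ (a-1) * t)) by ring] at h2
    exact not_pow_dvd hq2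
      (not_dvd_mul hq (prime_not_dvd_prime_pow hq hp (Ne.symm hpq) _)
        (not_dvd_mul hq (prime_not_dvd_prime_pow hq hp (Ne.symm hpq) _) hqt))
      (by omega) h2
  exact not_cochordal_of_four hn (p ^ (a - 1) * q ^ (b - 1) * t) (q ^ b * t) ((p ^ (a - 1) * q ^ (b - 1) * t) * (p * q - 1)) (p ^ a) hP0 hP1 hP2 hP3 hL0 hL1 hL2 hL3
    hN01 hN02 hN03 hN12 hN13 hN23 h02 h13 h01 h12 h23 h30

lemma bad_sq_two {n p q r : ℕ} (hn : 2 ≤ n) (hp : p.Prime) (hq : q.Prime) (hr : r.Prime)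
    (hpq : p ≠ q) (hpr : p ≠ r) (hqr : q ≠ r)
    (hdvd : p ^ 2 * q * r ∣ n) : ¬ IsCochordal (zdGraph (ZMod n)) := by
  have hn0 : n ≠ 0 := by omega
  have hp2 := hp.two_le; have hq2 := hq.two_le; have hr2 := hr.two_le
  have hp2n : p ^ 2 ∣ n := (((dvd_mul_right (p ^ 2) q).mul_right r)).trans hdvd
  have hqn : q ∣ n := dvd_trans (show q ∣ p ^ 2 * q * r from ⟨p ^ 2 * r, by ring⟩) hdvd
  have hrn : r ∣ n := (dvd_mul_left r _).trans hdvd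
  obtain ⟨a, t1, hn1, hpt1, ht1pos, -, ha⟩ := prime_decomp hn0 hp
  have ha2 : 2 ≤ a := ha hp2n
  have hqt1 : q ∣ t1 := prime_dvd_transfer hq hp hpq.symm (hn1 ▸ hqn)
  obtain ⟨b, t2, ht1, hqt2, ht2pos, hb', -⟩ := prime_decomp (by omega : t1 ≠ 0) hq
  have hb1 : 1 ≤ b := hb' hqt1
  have hrt2 : r ∣ t2 :=
    prime_dvd_transfer hr hq hqr.symm (ht1 ▸ prime_dvd_transfer hr hp hpr.symm (hn1 ▸ hrn))
  obtain ⟨c, t, ht2, hrt, htpos, hc', -⟩ := prime_decomp (by omega : t2 ≠ 0) hr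
  have hc1 : 1 ≤ c := hc' hrt2
  have htt2 : t ∣ t2 := ⟨r ^ c, by rw [ht2]; ring⟩
  have htt1 : t ∣ t1 := htt2.trans ⟨q ^ b, by rw [ht1]; ring⟩
  have hpt : ¬ p ∣ t := fun h => hpt1 (h.trans htt1)
  have hqt : ¬ q ∣ t := fun h => hqt2 (h.trans htt2)
  have hneq : n = p ^ a * (q ^ b * (r ^ c * t)) := by rw [hn1, ht1, ht2]
  have hpa : p ^ (a - 1) * p = p ^ a := by rw [← pow_succ]; congr 1; omega
  have npq : ¬ p ∣ q ^ b := prime_not_dvd_prime_pow hp hq hpq b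
  have npr : ¬ p ∣ r ^ c := prime_not_dvd_prime_pow hp hr hpr c
  have nqp : ¬ q ∣ p ^ a := prime_not_dvd_prime_pow hq hp hpq.symm a
  have nqp1 : ¬ q ∣ p := prime_not_dvd_prime_pow hq hp hpq.symm 1 ∘ (by rw [pow_one]; exact ·)
  have nqr : ¬ q ∣ r ^ c := prime_not_dvd_prime_pow hq hr hqr c
  have nrp : ¬ r ∣ p ^ a := prime_not_dvd_prime_pow hr hp hpr.symm a
  have nrp1 : ¬ r ∣ p ^ (a - 1) := prime_not_dvd_prime_pow hr hp hpr.symm (a - 1)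
  have nrq : ¬ r ∣ q ^ b := prime_not_dvd_prime_pow hr hq hqr.symm b
  have hP0 : 0 < (p ^ a * t) := Nat.mul_pos (pow_pos (by omega) _) htpos
  have hP1 : 0 < (p ^ (a - 1) * q ^ b * t) :=
    Nat.mul_pos (Nat.mul_pos (pow_pos (by omega) _) (pow_pos (by omega) _)) htpos
  have hP2 : 0 < (q ^ b * r ^ c) := Nat.mul_pos (pow_pos (by omega) _) (pow_pos (by omega) _)
  have hP3 : 0 < (p * r ^ c) := Nat.mul_pos (by omega) (pow_pos (by omega) _)
  have hgt : ∀ x y z : ℕ, 2 ≤ x → 0 < y → 0 < z → 1 < x * y * z := by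
    intro x y z hx hy hz
    calc 1 < x := by omega
    _ ≤ x * y := Nat.le_mul_of_pos_right _ hy
    _ ≤ x * y * z := Nat.le_mul_of_pos_right _ hz
  have hL0 : (p ^ a * t) < n :=
    lt_of_factor (show n = (p ^ a * t) * (q ^ b * r ^ c) by rw [hneq]; ring) hP0
      (by calc 1 < q ^ b := one_lt_pow_aux hq2 hb1
          _ ≤ q ^ b * r ^ c := Nat.le_mul_of_pos_right _ (pow_pos (by omega) _))
  have hL1 : (p ^ (a - 1) * q ^ b * t) < n :=
    lt_of_factor (show n = (p ^ (a - 1) * q ^ b * t) * (p * r ^ c) by rw [hneq, ← hpa]; ring) hP1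
      (by calc 1 < p := by omega
          _ ≤ p * r ^ c := Nat.le_mul_of_pos_right _ (pow_pos (by omega) _))
  have hL2 : (q ^ b * r ^ c) < n :=
    lt_of_factor (show n = (q ^ b * r ^ c) * (p ^ a * t) by rw [hneq]; ring) hP2
      (by calc 1 < p ^ a := one_lt_pow_aux hp2 (by omega)
          _ ≤ p ^ a * t := Nat.le_mul_of_pos_right _ htpos)
  have hL3 : (p * r ^ c) < n :=
    lt_of_factor (show n = (p * r ^ c) * (p ^ (a - 1) * q ^ b * t) by rw [hneq, ← hpa]; ring) hP3
      (by calc 1 < p ^ (a - 1) := one_lt_pow_aux hp2 (by omega)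
          _ ≤ p ^ (a - 1) * q ^ b := Nat.le_mul_of_pos_right _ (pow_pos (by omega) _)
          _ ≤ p ^ (a - 1) * q ^ b * t := Nat.le_mul_of_pos_right _ htpos)
  have hqD0 : ¬ q ∣ (p ^ a * t) := not_dvd_mul hq nqp hqt
  have hqD1 : q ∣ (p ^ (a - 1) * q ^ b * t) := (dvd_pow_self q (by omega : b ≠ 0)).trans ⟨p ^ (a-1) * t, by ring⟩
  have hpD1 : p ∣ (p ^ (a - 1) * q ^ b * t) := (dvd_pow_self p (by omega : a - 1 ≠ 0)).trans ⟨q ^ b * t, by ring⟩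
  have hpD2 : ¬ p ∣ (q ^ b * r ^ c) := not_dvd_mul hp npq npr
  have hpD0 : p ∣ (p ^ a * t) := (dvd_pow_self p (by omega : a ≠ 0)).trans (dvd_mul_right _ _)
  have hrD0 : ¬ r ∣ (p ^ a * t) := not_dvd_mul hr nrp hrt
  have hrD3 : r ∣ (p * r ^ c) := (dvd_pow_self r (by omega : c ≠ 0)).trans (dvd_mul_left _ _)
  have hqD3 : ¬ q ∣ (p * r ^ c) := not_dvd_mul hq nqp1 nqr
  have hpD3 : p ∣ (p * r ^ c) := dvd_mul_right _ _
  have hN01 : (p ^ a * t) ≠ (p ^ (a - 1) * q ^ b * t) := fun h => hqD0 (by rw [h]; exact hqD1)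
  have hN02 : (p ^ a * t) ≠ (q ^ b * r ^ c) := fun h => hpD2 (by rw [← h]; exact hpD0)
  have hN03 : (p ^ a * t) ≠ (p * r ^ c) := fun h => hrD0 (by rw [h]; exact hrD3)
  have hN12 : (p ^ (a - 1) * q ^ b * t) ≠ (q ^ b * r ^ c) := fun h => hpD2 (by rw [← h]; exact hpD1)
  have hN13 : (p ^ (a - 1) * q ^ b * t) ≠ (p * r ^ c) := fun h => hqD3 (by rw [← h]; exact hqD1)
  have hN23 : (q ^ b * r ^ c) ≠ (p * r ^ c) := fun h => hpD2 (by rw [h]; exact hpD3)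
  have h02 : n ∣ (p ^ a * t) * (q ^ b * r ^ c) := dvd_of_eq (by rw [hneq]; ring)
  have h13 : n ∣ (p ^ (a - 1) * q ^ b * t) * (p * r ^ c) := dvd_of_eq (by rw [hneq, ← hpa]; ring)
  have hpan : p ^ a ∣ n := by rw [hneq]; exact dvd_mul_right _ _
  have h01 : ¬ n ∣ (p ^ a * t) * (p ^ (a - 1) * q ^ b * t) := by
    intro h
    have h2 := hrn.trans h
    exact not_dvd_mul hr (not_dvd_mul hr nrp hrt)
      (not_dvd_mul hr (not_dvd_mul hr nrp1 nrq) hrt) h2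
  have h12 : ¬ n ∣ (p ^ (a - 1) * q ^ b * t) * (q ^ b * r ^ c) := by
    intro h
    have h2 := hpan.trans h
    rw [show (p ^ (a - 1) * q ^ b * t) * (q ^ b * r ^ c) = p ^ (a-1) * (q ^ b * t * (q ^ b * r ^ c)) by ring] at h2
    exact not_pow_dvd hp2
      (not_dvd_mul hp (not_dvd_mul hp npq hpt) (not_dvd_mul hp npq npr)) (by omega) h2
  have h23 : ¬ n ∣ (q ^ b * r ^ c) * (p * r ^ c) := by
    intro h
    have h2 := hpan.trans h
    rw [show (q ^ b * r ^ c) * (p * r ^ c) = p ^ 1 * (q ^ b * r ^ c * r ^ c) by rw [pow_one]; ring] at h2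
    exact not_pow_dvd hp2
      (not_dvd_mul hp (not_dvd_mul hp npq npr) npr) (by omega) h2
  have h30 : ¬ n ∣ (p * r ^ c) * (p ^ a * t) := by
    intro h
    have h2 := hqn.trans h
    exact not_dvd_mul hq (not_dvd_mul hq nqp1 nqr) (not_dvd_mul hq nqp hqt) h2
  exact not_cochordal_of_four hn (p ^ a * t) (p ^ (a - 1) * q ^ b * t) (q ^ b * r ^ c) (p * r ^ c) hP0 hP1 hP2 hP3 hL0 hL1 hL2 hL3
    hN01 hN02 hN03 hN12 hN13 hN23 h02 h13 h01 h12 h23 h30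

lemma bad_four {n p q r s : ℕ} (hn : 2 ≤ n) (hp : p.Prime) (hq : q.Prime) (hr : r.Prime)
    (hs : s.Prime) (hpq : p ≠ q) (hpr : p ≠ r) (hps : p ≠ s) (hqr : q ≠ r) (hqs : q ≠ s)
    (hrs : r ≠ s) (hdvd : p * q * r * s ∣ n) : ¬ IsCochordal (zdGraph (ZMod n)) := by
  have hn0 : n ≠ 0 := by omega
  have hp2 := hp.two_le; have hq2 := hq.two_le; have hr2 := hr.two_le; have hs2 := hs.two_le
  have hpn : p ∣ n := dvd_trans (show p ∣ p * q * r * s from ⟨q * r * s, by ring⟩) hdvd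
  have hqn : q ∣ n := dvd_trans (show q ∣ p * q * r * s from ⟨p * r * s, by ring⟩) hdvd
  have hrn : r ∣ n := dvd_trans (show r ∣ p * q * r * s from ⟨p * q * s, by ring⟩) hdvd
  have hsn : s ∣ n := dvd_trans (show s ∣ p * q * r * s from ⟨p * q * r, by ring⟩) hdvd
  obtain ⟨a, t1, hn1, hpt1, ht1pos, ha', -⟩ := prime_decomp hn0 hp
  have ha1 : 1 ≤ a := ha' hpn
  have hqt1 : q ∣ t1 := prime_dvd_transfer hq hp hpq.symm (hn1 ▸ hqn)
  obtain ⟨b, t2, ht1, hqt2, ht2pos, hb', -⟩ := prime_decomp (by omega : t1 ≠ 0) hq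
  have hb1 : 1 ≤ b := hb' hqt1
  have hrt2 : r ∣ t2 :=
    prime_dvd_transfer hr hq hqr.symm (ht1 ▸ prime_dvd_transfer hr hp hpr.symm (hn1 ▸ hrn))
  obtain ⟨c, t3, ht2, hrt3, ht3pos, hc', -⟩ := prime_decomp (by omega : t2 ≠ 0) hr
  have hc1 : 1 ≤ c := hc' hrt2
  have hst3 : s ∣ t3 :=
    prime_dvd_transfer hs hr hrs.symm (ht2 ▸ prime_dvd_transfer hs hq hqs.symm
      (ht1 ▸ prime_dvd_transfer hs hp hps.symm (hn1 ▸ hsn)))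
  obtain ⟨d, t, ht3, hst, htpos, hd', -⟩ := prime_decomp (by omega : t3 ≠ 0) hs
  have hd1 : 1 ≤ d := hd' hst3
  have htt3 : t ∣ t3 := ⟨s ^ d, by rw [ht3]; ring⟩
  have htt2 : t ∣ t2 := htt3.trans ⟨r ^ c, by rw [ht2]; ring⟩
  have htt1 : t ∣ t1 := htt2.trans ⟨q ^ b, by rw [ht1]; ring⟩
  have hpt : ¬ p ∣ t := fun h => hpt1 (h.trans htt1)
  have hqt : ¬ q ∣ t := fun h => hqt2 (h.trans htt2)
  have hrt : ¬ r ∣ t := fun h => hrt3 (h.trans htt3)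
  have hneq : n = p ^ a * (q ^ b * (r ^ c * (s ^ d * t))) := by rw [hn1, ht1, ht2, ht3]
  have npq : ¬ p ∣ q ^ b := prime_not_dvd_prime_pow hp hq hpq b
  have npr : ¬ p ∣ r ^ c := prime_not_dvd_prime_pow hp hr hpr c
  have nps : ¬ p ∣ s ^ d := prime_not_dvd_prime_pow hp hs hps d
  have nqp : ¬ q ∣ p ^ a := prime_not_dvd_prime_pow hq hp hpq.symm a
  have nqr : ¬ q ∣ r ^ c := prime_not_dvd_prime_pow hq hr hqr c
  have nqs : ¬ q ∣ s ^ d := prime_not_dvd_prime_pow hq hs hqs d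
  have nrp : ¬ r ∣ p ^ a := prime_not_dvd_prime_pow hr hp hpr.symm a
  have nrq : ¬ r ∣ q ^ b := prime_not_dvd_prime_pow hr hq hqr.symm b
  have nrs : ¬ r ∣ s ^ d := prime_not_dvd_prime_pow hr hs hrs d
  have nsp : ¬ s ∣ p ^ a := prime_not_dvd_prime_pow hs hp hps.symm a
  have nsq : ¬ s ∣ q ^ b := prime_not_dvd_prime_pow hs hq hqs.symm b
  have nsr : ¬ s ∣ r ^ c := prime_not_dvd_prime_pow hs hr hrs.symm c
  have hP0 : 0 < (p ^ a * q ^ b * t) :=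
    Nat.mul_pos (Nat.mul_pos (pow_pos (by omega) _) (pow_pos (by omega) _)) htpos
  have hP1 : 0 < (p ^ a * r ^ c * t) :=
    Nat.mul_pos (Nat.mul_pos (pow_pos (by omega) _) (pow_pos (by omega) _)) htpos
  have hP2 : 0 < (r ^ c * s ^ d) := Nat.mul_pos (pow_pos (by omega) _) (pow_pos (by omega) _)
  have hP3 : 0 < (q ^ b * s ^ d) := Nat.mul_pos (pow_pos (by omega) _) (pow_pos (by omega) _)
  have haux : ∀ x y : ℕ, 1 < x → 0 < y → 1 < x * y := by
    intro x y hx hy; calc 1 < x := hx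
    _ ≤ x * y := Nat.le_mul_of_pos_right _ hy
  have hL0 : (p ^ a * q ^ b * t) < n :=
    lt_of_factor (show n = (p ^ a * q ^ b * t) * (r ^ c * s ^ d) by rw [hneq]; ring) hP0
      (haux _ _ (one_lt_pow_aux hr2 hc1) (pow_pos (by omega) _))
  have hL1 : (p ^ a * r ^ c * t) < n :=
    lt_of_factor (show n = (p ^ a * r ^ c * t) * (q ^ b * s ^ d) by rw [hneq]; ring) hP1
      (haux _ _ (one_lt_pow_aux hq2 hb1) (pow_pos (by omega) _))
  have hL2 : (r ^ c * s ^ d) < n :=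
    lt_of_factor (show n = (r ^ c * s ^ d) * (p ^ a * q ^ b * t) by rw [hneq]; ring) hP2
      (haux _ _ (haux _ _ (one_lt_pow_aux hp2 ha1) (pow_pos (by omega) _)) htpos)
  have hL3 : (q ^ b * s ^ d) < n :=
    lt_of_factor (show n = (q ^ b * s ^ d) * (p ^ a * r ^ c * t) by rw [hneq]; ring) hP3
      (haux _ _ (haux _ _ (one_lt_pow_aux hp2 ha1) (pow_pos (by omega) _)) htpos)
  have hqE0 : q ∣ (p ^ a * q ^ b * t) := (dvd_pow_self q (by omega : b ≠ 0)).trans ⟨p ^ a * t, by ring⟩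
  have hqE1 : ¬ q ∣ (p ^ a * r ^ c * t) := not_dvd_mul hq (not_dvd_mul hq nqp nqr) hqt
  have hpE0 : p ∣ (p ^ a * q ^ b * t) := (dvd_pow_self p (by omega : a ≠ 0)).trans ⟨q ^ b * t, by ring⟩
  have hpE1 : p ∣ (p ^ a * r ^ c * t) := (dvd_pow_self p (by omega : a ≠ 0)).trans ⟨r ^ c * t, by ring⟩
  have hpE2 : ¬ p ∣ (r ^ c * s ^ d) := not_dvd_mul hp npr nps
  have hpE3 : ¬ p ∣ (q ^ b * s ^ d) := not_dvd_mul hp npq nps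
  have hrE2 : r ∣ (r ^ c * s ^ d) := (dvd_pow_self r (by omega : c ≠ 0)).trans (dvd_mul_right _ _)
  have hrE3 : ¬ r ∣ (q ^ b * s ^ d) := not_dvd_mul hr nrq nrs
  have hN01 : (p ^ a * q ^ b * t) ≠ (p ^ a * r ^ c * t) := fun h => hqE1 (by rw [← h]; exact hqE0)
  have hN02 : (p ^ a * q ^ b * t) ≠ (r ^ c * s ^ d) := fun h => hpE2 (by rw [← h]; exact hpE0)
  have hN03 : (p ^ a * q ^ b * t) ≠ (q ^ b * s ^ d) := fun h => hpE3 (by rw [← h]; exact hpE0)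
  have hN12 : (p ^ a * r ^ c * t) ≠ (r ^ c * s ^ d) := fun h => hpE2 (by rw [← h]; exact hpE1)
  have hN13 : (p ^ a * r ^ c * t) ≠ (q ^ b * s ^ d) := fun h => hpE3 (by rw [← h]; exact hpE1)
  have hN23 : (r ^ c * s ^ d) ≠ (q ^ b * s ^ d) := fun h => hrE3 (by rw [← h]; exact hrE2)
  have h02 : n ∣ (p ^ a * q ^ b * t) * (r ^ c * s ^ d) := dvd_of_eq (by rw [hneq]; ring)
  have h13 : n ∣ (p ^ a * r ^ c * t) * (q ^ b * s ^ d) := dvd_of_eq (by rw [hneq]; ring)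
  have h01 : ¬ n ∣ (p ^ a * q ^ b * t) * (p ^ a * r ^ c * t) := fun h =>
    not_dvd_mul hs (not_dvd_mul hs (not_dvd_mul hs nsp nsq) hst)
      (not_dvd_mul hs (not_dvd_mul hs nsp nsr) hst) (hsn.trans h)
  have h12 : ¬ n ∣ (p ^ a * r ^ c * t) * (r ^ c * s ^ d) := fun h =>
    not_dvd_mul hq (not_dvd_mul hq (not_dvd_mul hq nqp nqr) hqt)
      (not_dvd_mul hq nqr nqs) (hqn.trans h)
  have h23 : ¬ n ∣ (r ^ c * s ^ d) * (q ^ b * s ^ d) := fun h =>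
    not_dvd_mul hp (not_dvd_mul hp npr nps) (not_dvd_mul hp npq nps) (hpn.trans h)
  have h30 : ¬ n ∣ (q ^ b * s ^ d) * (p ^ a * q ^ b * t) := fun h =>
    not_dvd_mul hr (not_dvd_mul hr nrq nrs)
      (not_dvd_mul hr (not_dvd_mul hr nrp nrq) hrt) (hrn.trans h)
  exact not_cochordal_of_four hn (p ^ a * q ^ b * t) (p ^ a * r ^ c * t) (r ^ c * s ^ d) (q ^ b * s ^ d) hP0 hP1 hP2 hP3 hL0 hL1 hL2 hL3
    hN01 hN02 hN03 hN12 hN13 hN23 h02 h13 h01 h12 h23 h30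

lemma not_cochordal_of_not_form (n : ℕ) (hn : 2 ≤ n)
    (h : ¬ ((∃ p a : ℕ, p.Prime ∧ 1 ≤ a ∧ n = p ^ a) ∨
       (∃ p q a : ℕ, p.Prime ∧ q.Prime ∧ p ≠ q ∧ 1 ≤ a ∧ n = p ^ a * q) ∨
       (∃ p q r : ℕ, p.Prime ∧ q.Prime ∧ r.Prime ∧ p ≠ q ∧ p ≠ r ∧ q ≠ r ∧
          n = p * q * r))) : ¬ IsCochordal (zdGraph (ZMod n)) := by
  have hn0 : n ≠ 0 := by omega
  have hp : n.minFac.Prime := Nat.minFac_prime (by omega)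
  set p := n.minFac with hpdef
  have hpn : p ∣ n := Nat.minFac_dvd n
  obtain ⟨a, t1, hn1, hpt1, ht1pos, ha', -⟩ := prime_decomp hn0 hp
  have ha1 : 1 ≤ a := ha' hpn
  by_cases h1 : t1 = 1
  · exact absurd (Or.inl ⟨p, a, hp, ha1, by rw [hn1, h1, mul_one]⟩) h
  have ht1_2 : 2 ≤ t1 := by omega
  have hq : t1.minFac.Prime := Nat.minFac_prime (by omega)
  set q := t1.minFac with hqdef
  have hqt1 : q ∣ t1 := Nat.minFac_dvd t1
  have hpq : p ≠ q := fun he => hpt1 (he ▸ hqt1)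
  obtain ⟨b, t2, ht1e, hqt2, ht2pos, hb', -⟩ := prime_decomp (by omega : t1 ≠ 0) hq
  have hb1 : 1 ≤ b := hb' hqt1
  have hpt2 : ¬ p ∣ t2 := fun hh => hpt1 (hh.trans ⟨q ^ b, by rw [ht1e]; ring⟩)
  by_cases h2 : t2 = 1
  · -- n = p^a * q^b
    have hne : n = p ^ a * q ^ b := by rw [hn1, ht1e, h2, mul_one]
    by_cases hb : b = 1
    · exact absurd (Or.inr (Or.inl ⟨p, q, a, hp, hq, hpq, ha1, by rw [hne, hb, pow_one]⟩)) h
    by_cases haa : a = 1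
    · refine absurd (Or.inr (Or.inl ⟨q, p, b, hq, hp, hpq.symm, hb1, ?_⟩)) h
      rw [hne, haa, pow_one]; ring
    · exact bad_sq_sq hn hp hq hpq (by
        rw [hne]
        exact mul_dvd_mul (pow_dvd_pow p (by omega)) (pow_dvd_pow q (by omega)))
  have ht2_2 : 2 ≤ t2 := by omega
  have hr : t2.minFac.Prime := Nat.minFac_prime (by omega)
  set r := t2.minFac with hrdef
  have hrt2 : r ∣ t2 := Nat.minFac_dvd t2
  have hpr : p ≠ r := fun he => hpt2 (he ▸ hrt2)
  have hqr : q ≠ r := fun he => hqt2 (he ▸ hrt2)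
  obtain ⟨c, t3, ht2e, hrt3, ht3pos, hc', -⟩ := prime_decomp (by omega : t2 ≠ 0) hr
  have hc1 : 1 ≤ c := hc' hrt2
  by_cases h3 : t3 = 1
  · -- n = p^a * q^b * r^c
    have hne : n = p ^ a * (q ^ b * r ^ c) := by rw [hn1, ht1e, ht2e, h3, mul_one]
    by_cases haa : a = 1
    · by_cases hbb : b = 1
      · by_cases hcc : c = 1
        · refine absurd (Or.inr (Or.inr ⟨p, q, r, hp, hq, hr, hpq, hpr, hqr, ?_⟩)) h
          rw [hne, haa, hbb, hcc, pow_one, pow_one, pow_one]; ring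
        · -- c ≥ 2
          refine bad_sq_two hn hr hp hq hpr.symm hqr.symm hpq ?_
          refine dvd_trans ?_ (dvd_of_eq hne.symm)
          have : r ^ 2 * p * q ∣ r ^ c * (p ^ a * q ^ b) := by
            rw [show r ^ 2 * p * q = r ^ 2 * (p * q) by ring]
            exact mul_dvd_mul (pow_dvd_pow r (by omega))
              (mul_dvd_mul (dvd_pow_self p (by omega)) (dvd_pow_self q (by omega)))
          exact this.trans (dvd_of_eq (by ring))
      · -- b ≥ 2
        refine bad_sq_two hn hq hp hr hpq.symm hqr hpr ?_
        refine dvd_trans ?_ (dvd_of_eq hne.symm)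
        have : q ^ 2 * p * r ∣ q ^ b * (p ^ a * r ^ c) := by
          rw [show q ^ 2 * p * r = q ^ 2 * (p * r) by ring]
          exact mul_dvd_mul (pow_dvd_pow q (by omega))
            (mul_dvd_mul (dvd_pow_self p (by omega)) (dvd_pow_self r (by omega)))
        exact this.trans (dvd_of_eq (by ring))
    · -- a ≥ 2
      refine bad_sq_two hn hp hq hr hpq hpr hqr ?_
      refine dvd_trans ?_ (dvd_of_eq hne.symm)
      have : p ^ 2 * q * r ∣ p ^ a * (q ^ b * r ^ c) := by
        rw [show p ^ 2 * q * r = p ^ 2 * (q * r) by ring]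
        exact mul_dvd_mul (pow_dvd_pow p (by omega))
          (mul_dvd_mul (dvd_pow_self q (by omega)) (dvd_pow_self r (by omega)))
      exact this
  · -- fourth prime
    have ht3_2 : 2 ≤ t3 := by omega
    have hs : t3.minFac.Prime := Nat.minFac_prime (by omega)
    set s := t3.minFac with hsdef
    have hst3 : s ∣ t3 := Nat.minFac_dvd t3
    have ht3t2 : t3 ∣ t2 := ⟨r ^ c, by rw [ht2e]; ring⟩
    have ht3t1 : t3 ∣ t1 := ht3t2.trans ⟨q ^ b, by rw [ht1e]; ring⟩
    have hps : p ≠ s := fun he => hpt1 (he ▸ (hst3.trans ht3t1))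
    have hqs : q ≠ s := fun he => hqt2 (he ▸ (hst3.trans ht3t2))
    have hrs : r ≠ s := fun he => hrt3 (he ▸ hst3)
    refine bad_four hn hp hq hr hs hpq hpr hps hqr hqs hrs ?_
    have hne : n = p ^ a * q ^ b * r ^ c * t3 := by rw [hn1, ht1e, ht2e]; ring
    rw [hne]
    exact mul_dvd_mul (mul_dvd_mul (mul_dvd_mul (dvd_pow_self p (by omega))
      (dvd_pow_self q (by omega))) (dvd_pow_self r (by omega))) hst3

/-- For `n ≥ 2`, the zero-divisor graph `Γ(ℤ/nℤ)` is cochordal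
iff `n = p^a`, `n = p^a·q`, or `n = p·q·r` with `p, q, r` distinct primes and `a ≥ 1`. -/
theorem zdGraph_zmod_cochordal_iff (n : ℕ) (hn : 2 ≤ n) :
    IsCochordal (zdGraph (ZMod n)) ↔
      ((∃ p a : ℕ, p.Prime ∧ 1 ≤ a ∧ n = p ^ a) ∨
       (∃ p q a : ℕ, p.Prime ∧ q.Prime ∧ p ≠ q ∧ 1 ≤ a ∧ n = p ^ a * q) ∨
       (∃ p q r : ℕ, p.Prime ∧ q.Prime ∧ r.Prime ∧ p ≠ q ∧ p ≠ r ∧ q ≠ r ∧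
          n = p * q * r)) := by
  constructor
  · intro hco
    by_contra hforms
    exact not_cochordal_of_not_form n hn hforms hco
  · rintro (⟨p, a, hp, ha, rfl⟩ | ⟨p, q, a, hp, hq, hpq, ha, rfl⟩ |
      ⟨p, q, r, hp, hq, hr, hpq, hpr, hqr, rfl⟩)
    · exact cochordal_prime_pow p a hp ha
    · exact cochordal_pow_mul p q a hp hq hpq ha
    · exact cochordal_three_primes p q r hp hq hr hpq hpr hqr
end

section
/- If an integer n ≥ 2 has at least four distinct prime divisors, then the zero-divisor graph Γ(ℤ/nℤ) contains an induced matching of size two. -/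
/-- An induced matching of size two: four distinct vertices `a, b, c, d` such that
`{a,b}` and `{c,d}` are edges while none of `{a,c}, {a,d}, {b,c}, {b,d}` is an edge. -/
def HasInducedMatchingTwo {V : Type*} (G : SimpleGraph V) : Prop :=
  ∃ a b c d : V, a ≠ b ∧ a ≠ c ∧ a ≠ d ∧ b ≠ c ∧ b ≠ d ∧ c ≠ d ∧
    G.Adj a b ∧ G.Adj c d ∧ ¬ G.Adj a c ∧ ¬ G.Adj a d ∧ ¬ G.Adj b c ∧ ¬ G.Adj b d

lemma zmodNeZeroAux {n t : ℕ} [NeZero n] (x : ℕ) (htn : t ∣ n) (hx : ¬ t ∣ x) :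
    (x : ZMod n) ≠ 0 := fun h =>
  hx (dvd_trans htn ((ZMod.natCast_eq_zero_iff x n).mp h))

lemma zmodNeOfPrime {n t : ℕ} (x y : ℕ) (ht : t.Prime) (htn : t ∣ n)
    (hx : t ∣ x) (hy : ¬ t ∣ y) : (x : ZMod n) ≠ (y : ZMod n) := by
  haveI : NeZero t := ⟨ht.pos.ne'⟩
  intro h
  have h2 : (x : ZMod t) = (y : ZMod t) := by
    have := congrArg (ZMod.castHom htn (ZMod t)) h
    simpa using this
  have hx0 : (x : ZMod t) = 0 := (ZMod.natCast_eq_zero_iff x t).mpr hx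
  exact hy ((ZMod.natCast_eq_zero_iff y t).mp (by rw [← h2, hx0]))

lemma not_dvd_ordProj_mul {t u v n : ℕ} (ht : t.Prime) (hu : u.Prime) (hv : v.Prime)
    (htu : t ≠ u) (htv : t ≠ v) : ¬ t ∣ ordProj[u] n * ordProj[v] n := by
  intro h
  rcases (Nat.Prime.dvd_mul ht).mp h with h | h
  · exact htu ((Nat.prime_dvd_prime_iff_eq ht hu).mp (ht.dvd_of_dvd_pow h))
  · exact htv ((Nat.prime_dvd_prime_iff_eq ht hv).mp (ht.dvd_of_dvd_pow h))

/-- If `n ≥ 2` has at least four distinct prime divisors, then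
`Γ(ℤ/nℤ)` contains an induced matching of size two. -/
theorem zdGraph_zmod_hasInducedMatchingTwo_of_four_primeFactors
    (n : ℕ) (hn : 2 ≤ n) (h4 : 4 ≤ n.primeFactors.card) :
    HasInducedMatchingTwo (zdGraph (ZMod n)) := by
  have hn0 : n ≠ 0 := by omega
  haveI : NeZero n := ⟨hn0⟩
  obtain ⟨T, hTs, hTc⟩ := Finset.exists_subset_card_eq h4
  have hTne : T.Nonempty := Finset.card_pos.mp (by omega)
  obtain ⟨p, hpT⟩ := hTne
  have hT3 : (T.erase p).card = 3 := by rw [Finset.card_erase_of_mem hpT, hTc]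
  obtain ⟨q, r, s, hqr, hqs, hrs, hTe⟩ := Finset.card_eq_three.mp hT3
  have hqT : q ∈ T.erase p := by rw [hTe]; simp
  have hrT : r ∈ T.erase p := by rw [hTe]; simp
  have hsT : s ∈ T.erase p := by rw [hTe]; simp
  have hpq : p ≠ q := fun h => (Finset.ne_of_mem_erase hqT) h.symm
  have hpr : p ≠ r := fun h => (Finset.ne_of_mem_erase hrT) h.symm
  have hps : p ≠ s := fun h => (Finset.ne_of_mem_erase hsT) h.symm
  have hpP : p ∈ n.primeFactors := hTs hpT
  have hqP : q ∈ n.primeFactors := hTs (Finset.mem_of_mem_erase hqT)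
  have hrP : r ∈ n.primeFactors := hTs (Finset.mem_of_mem_erase hrT)
  have hsP : s ∈ n.primeFactors := hTs (Finset.mem_of_mem_erase hsT)
  have hp' : p.Prime := Nat.prime_of_mem_primeFactors hpP
  have hq' : q.Prime := Nat.prime_of_mem_primeFactors hqP
  have hr' : r.Prime := Nat.prime_of_mem_primeFactors hrP
  have hs' : s.Prime := Nat.prime_of_mem_primeFactors hsP
  have hpn : p ∣ n := Nat.dvd_of_mem_primeFactors hpP
  have hqn : q ∣ n := Nat.dvd_of_mem_primeFactors hqP
  have hrn : r ∣ n := Nat.dvd_of_mem_primeFactors hrP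
  have hsn : s ∣ n := Nat.dvd_of_mem_primeFactors hsP
  -- the four numbers
  set m1 : ℕ := ordCompl[p] n with hm1
  have hm1ne : m1 ≠ 0 := (Nat.ordCompl_pos p hn0).ne'
  set A : ℕ := ordProj[p] n * ordProj[q] n with hA
  set B : ℕ := ordCompl[q] m1 with hB
  set C : ℕ := ordProj[p] n * ordProj[r] n with hC
  set D : ℕ := ordCompl[r] m1 with hD
  -- ordProj of m1 equals ordProj of n for q, r
  have hfq : m1.factorization q = n.factorization q := by
    rw [hm1, Nat.factorization_ordCompl, Finsupp.erase_ne (Ne.symm hpq)]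
  have hfr : m1.factorization r = n.factorization r := by
    rw [hm1, Nat.factorization_ordCompl, Finsupp.erase_ne (Ne.symm hpr)]
  have hAB : A * B = n := by
    have h1 : ordProj[q] m1 * ordCompl[q] m1 = m1 := Nat.ordProj_mul_ordCompl_eq_self m1 q
    rw [hfq] at h1
    calc A * B = ordProj[p] n * (ordProj[q] n * ordCompl[q] m1) := by ring
    _ = ordProj[p] n * m1 := by rw [hfq, h1]
    _ = n := Nat.ordProj_mul_ordCompl_eq_self n p
  have hCD : C * D = n := by
    have h1 : ordProj[r] m1 * ordCompl[r] m1 = m1 := Nat.ordProj_mul_ordCompl_eq_self m1 r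
    rw [hfr] at h1
    calc C * D = ordProj[p] n * (ordProj[r] n * ordCompl[r] m1) := by ring
    _ = ordProj[p] n * m1 := by rw [hfr, h1]
    _ = n := Nat.ordProj_mul_ordCompl_eq_self n p
  -- positive exponents
  have hβ : 0 < n.factorization q := hq'.factorization_pos_of_dvd hn0 hqn
  have hγ : 0 < n.factorization r := hr'.factorization_pos_of_dvd hn0 hrn
  -- divisibility facts
  have hqA : q ∣ A := Dvd.dvd.mul_left (dvd_pow_self q hβ.ne') _
  have hrC : r ∣ C := Dvd.dvd.mul_left (dvd_pow_self r hγ.ne') _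
  have hsA : ¬ s ∣ A := not_dvd_ordProj_mul hs' hp' hq' (Ne.symm hps) (Ne.symm hqs)
  have hsC : ¬ s ∣ C := not_dvd_ordProj_mul hs' hp' hr' (Ne.symm hps) (Ne.symm hrs)
  have hrA : ¬ r ∣ A := not_dvd_ordProj_mul hr' hp' hq' (Ne.symm hpr) (Ne.symm hqr)
  have hqC : ¬ q ∣ C := not_dvd_ordProj_mul hq' hp' hr' (Ne.symm hpq) hqr
  have hqB : ¬ q ∣ B := Nat.not_dvd_ordCompl hq' hm1ne
  have hrD : ¬ r ∣ D := Nat.not_dvd_ordCompl hr' hm1ne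
  have hBm1 : B ∣ m1 := Nat.ordCompl_dvd m1 q
  have hDm1 : D ∣ m1 := Nat.ordCompl_dvd m1 r
  have hpm1 : ¬ p ∣ m1 := Nat.not_dvd_ordCompl hp' hn0
  have hpB : ¬ p ∣ B := fun h => hpm1 (h.trans hBm1)
  have hpD : ¬ p ∣ D := fun h => hpm1 (h.trans hDm1)
  have hqD : q ∣ D := by
    rcases (Nat.Prime.dvd_mul hq').mp (hCD ▸ hqn) with h | h
    · exact absurd h hqC
    · exact h
  have hsD : s ∣ D := by
    rcases (Nat.Prime.dvd_mul hs').mp (hCD ▸ hsn) with h | h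
    · exact absurd h hsC
    · exact h
  -- vertices are nonzero in ZMod n
  have hA0 : (A : ZMod n) ≠ 0 := zmodNeZeroAux A hsn hsA
  have hB0 : (B : ZMod n) ≠ 0 := zmodNeZeroAux B hpn hpB
  have hC0 : (C : ZMod n) ≠ 0 := zmodNeZeroAux C hsn hsC
  have hD0 : (D : ZMod n) ≠ 0 := zmodNeZeroAux D hrn hrD
  -- products
  have hABz : (A : ZMod n) * (B : ZMod n) = 0 := by
    rw [← Nat.cast_mul, hAB, ZMod.natCast_self]
  have hCDz : (C : ZMod n) * (D : ZMod n) = 0 := by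
    rw [← Nat.cast_mul, hCD, ZMod.natCast_self]
  have hACz : (A : ZMod n) * (C : ZMod n) ≠ 0 := by
    rw [← Nat.cast_mul]
    exact zmodNeZeroAux _ hsn (fun h => by
      rcases (Nat.Prime.dvd_mul hs').mp h with h | h
      exacts [hsA h, hsC h])
  have hADz : (A : ZMod n) * (D : ZMod n) ≠ 0 := by
    rw [← Nat.cast_mul]
    exact zmodNeZeroAux _ hrn (fun h => by
      rcases (Nat.Prime.dvd_mul hr').mp h with h | h
      exacts [hrA h, hrD h])
  have hBCz : (B : ZMod n) * (C : ZMod n) ≠ 0 := by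
    rw [← Nat.cast_mul]
    exact zmodNeZeroAux _ hqn (fun h => by
      rcases (Nat.Prime.dvd_mul hq').mp h with h | h
      exacts [hqB h, hqC h])
  have hBDz : (B : ZMod n) * (D : ZMod n) ≠ 0 := by
    rw [← Nat.cast_mul]
    exact zmodNeZeroAux _ hpn (fun h => by
      rcases (Nat.Prime.dvd_mul hp').mp h with h | h
      exacts [hpB h, hpD h])
  -- distinctness
  have hABne : (A : ZMod n) ≠ (B : ZMod n) := zmodNeOfPrime A B hq' hqn hqA hqB
  have hACne : (A : ZMod n) ≠ (C : ZMod n) := zmodNeOfPrime A C hq' hqn hqA hqC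
  have hADne : (D : ZMod n) ≠ (A : ZMod n) := zmodNeOfPrime D A hs' hsn hsD hsA
  have hα : 0 < n.factorization p := hp'.factorization_pos_of_dvd hn0 hpn
  have hpC : p ∣ C := Dvd.dvd.mul_right (dvd_pow_self p hα.ne') _
  have hBCne : (C : ZMod n) ≠ (B : ZMod n) := zmodNeOfPrime C B hp' hpn hpC hpB
  have hBDne : (D : ZMod n) ≠ (B : ZMod n) := zmodNeOfPrime D B hq' hqn hqD hqB
  have hCDne : (C : ZMod n) ≠ (D : ZMod n) := zmodNeOfPrime C D hr' hrn hrC hrD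
  -- build vertices
  refine ⟨⟨(A : ZMod n), hA0, (B : ZMod n), hB0, hABz⟩,
         ⟨(B : ZMod n), hB0, (A : ZMod n), hA0, by rw [mul_comm]; exact hABz⟩,
         ⟨(C : ZMod n), hC0, (D : ZMod n), hD0, hCDz⟩,
         ⟨(D : ZMod n), hD0, (C : ZMod n), hC0, by rw [mul_comm]; exact hCDz⟩,
         ?_, ?_, ?_, ?_, ?_, ?_, ?_, ?_, ?_, ?_, ?_, ?_⟩
  · exact fun h => hABne (congrArg Subtype.val h)
  · exact fun h => hACne (congrArg Subtype.val h)
  · exact fun h => hADne (congrArg Subtype.val h).symm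
  · exact fun h => hBCne (congrArg Subtype.val h).symm
  · exact fun h => hBDne (congrArg Subtype.val h).symm
  · exact fun h => hCDne (congrArg Subtype.val h)
  · exact show _ ∧ _ from ⟨fun h => hABne (congrArg Subtype.val h), hABz⟩
  · exact show _ ∧ _ from ⟨fun h => hCDne (congrArg Subtype.val h), hCDz⟩
  · exact fun h => hACz (show _ ∧ _ from h).2
  · exact fun h => hADz (show _ ∧ _ from h).2
  · exact fun h => hBCz (show _ ∧ _ from h).2
  · exact fun h => hBDz (show _ ∧ _ from h).2
end

section
/- Let n = p^a·q^b·r^c where p, q, r are distinct primes, a, b, c ≥ 1, and at least one of a, b, c is larger than one. Then the zero-divisor graph Γ(ℤ/nℤ) is not cochordal; indeed it contains an induced matching of size two. -/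
lemma nd2' {p x y : ℕ} (hp : p.Prime) (hx : ¬ p ∣ x) (hy : ¬ p ∣ y) (i j : ℕ) :
    ¬ p ∣ x ^ i * y ^ j := by
  intro h
  rcases (Nat.Prime.dvd_mul hp).mp h with h | h
  · exact hx (hp.dvd_of_dvd_pow h)
  · exact hy (hp.dvd_of_dvd_pow h)

lemma ndvd' {p e f s m : ℕ} (hp : 0 < p) (hpe : p ^ e ∣ m) (hf : f < e) (hs : ¬ p ∣ s) :
    ¬ m ∣ p ^ f * s := by
  intro h
  have h1 : p ^ (f + 1) ∣ p ^ f * s := (pow_dvd_pow p hf).trans (hpe.trans h)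
  rw [pow_succ] at h1
  exact hs ((Nat.mul_dvd_mul_iff_left (pow_pos hp f)).mp h1)

lemma key_matching (p q r b c A : ℕ) (hp : p.Prime) (hq : q.Prime) (hr : r.Prime)
    (hpq : p ≠ q) (hpr : p ≠ r) (hqr : q ≠ r) (hb : 1 ≤ b) (hc : 1 ≤ c) :
    HasInducedMatchingTwo (zdGraph (ZMod (p ^ (A + 2) * q ^ b * r ^ c))) := by
  set m := p ^ (A + 2) * q ^ b * r ^ c with hm
  have hppos := hp.pos
  have hqpos := hq.pos
  have hrpos := hr.pos
  haveI : NeZero m := ⟨by positivity⟩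
  have hPQ : ¬ p ∣ q := fun h => hpq ((Nat.prime_dvd_prime_iff_eq hp hq).mp h)
  have hPR : ¬ p ∣ r := fun h => hpr ((Nat.prime_dvd_prime_iff_eq hp hr).mp h)
  have hQP : ¬ q ∣ p := fun h => hpq.symm ((Nat.prime_dvd_prime_iff_eq hq hp).mp h)
  have hQR : ¬ q ∣ r := fun h => hqr ((Nat.prime_dvd_prime_iff_eq hq hr).mp h)
  have hRP : ¬ r ∣ p := fun h => hpr.symm ((Nat.prime_dvd_prime_iff_eq hr hp).mp h)
  have hRQ : ¬ r ∣ q := fun h => hqr.symm ((Nat.prime_dvd_prime_iff_eq hr hq).mp h)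
  have hdp : p ^ (A + 2) ∣ m := ⟨q ^ b * r ^ c, by rw [hm]; ring⟩
  have hdq : q ^ b ∣ m := ⟨p ^ (A + 2) * r ^ c, by rw [hm]; ring⟩
  have hdr : r ^ c ∣ m := ⟨p ^ (A + 2) * q ^ b, by rw [hm]; ring⟩
  -- nat level facts
  have z1 : m ∣ (q ^ b * r ^ c) * (p ^ (A + 2)) := ⟨1, by rw [hm]; ring⟩
  have z2 : m ∣ (p * q ^ b) * (p ^ (A + 1) * r ^ c) := ⟨1, by rw [hm]; ring⟩
  have n_x1 : ¬ m ∣ q ^ b * r ^ c := by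
    have h := ndvd' hppos hdp (show 0 < A + 2 by omega) (nd2' hp hPQ hPR b c)
    simpa using h
  have n_y1 : ¬ m ∣ p ^ (A + 2) := by
    have h := ndvd' hqpos hdq hb (nd2' hq hQP hQR (A + 2) 0)
    simpa using h
  have n_x2 : ¬ m ∣ p * q ^ b := by
    have h := ndvd' hrpos hdr hc (nd2' hr hRP hRQ 1 b)
    simpa using h
  have n_y2 : ¬ m ∣ p ^ (A + 1) * r ^ c := by
    have h := ndvd' hqpos hdq hb (nd2' hq hQP hQR (A + 1) c)
    simpa using h
  have n_x1x1 : ¬ m ∣ (q ^ b * r ^ c) * (q ^ b * r ^ c) := by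
    have h := ndvd' hppos hdp (show 0 < A + 2 by omega) (nd2' hp hPQ hPR (b + b) (c + c))
    have e : (q ^ b * r ^ c) * (q ^ b * r ^ c) = p ^ 0 * (q ^ (b + b) * r ^ (c + c)) := by ring
    rw [e]; exact h
  have n_x1x2 : ¬ m ∣ (q ^ b * r ^ c) * (p * q ^ b) := by
    have h := ndvd' hppos hdp (show 1 < A + 2 by omega) (nd2' hp hPQ hPR (b + b) c)
    have e : (q ^ b * r ^ c) * (p * q ^ b) = p ^ 1 * (q ^ (b + b) * r ^ c) := by ring
    rw [e]; exact h
  have n_x1y2 : ¬ m ∣ (q ^ b * r ^ c) * (p ^ (A + 1) * r ^ c) := by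
    have h := ndvd' hppos hdp (show A + 1 < A + 2 by omega) (nd2' hp hPQ hPR b (c + c))
    have e : (q ^ b * r ^ c) * (p ^ (A + 1) * r ^ c) = p ^ (A + 1) * (q ^ b * r ^ (c + c)) := by
      ring
    rw [e]; exact h
  have n_y1x2 : ¬ m ∣ (p ^ (A + 2)) * (p * q ^ b) := by
    have h := ndvd' hrpos hdr hc (nd2' hr hRP hRQ (A + 3) b)
    have e : (p ^ (A + 2)) * (p * q ^ b) = r ^ 0 * (p ^ (A + 3) * q ^ b) := by ring
    rw [e]; exact h
  have n_y1y2 : ¬ m ∣ (p ^ (A + 2)) * (p ^ (A + 1) * r ^ c) := by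
    have h := ndvd' hqpos hdq hb (nd2' hq hQP hQR (A + A + 3) c)
    have e : (p ^ (A + 2)) * (p ^ (A + 1) * r ^ c) = q ^ 0 * (p ^ (A + A + 3) * r ^ c) := by
      ring
    rw [e]; exact h
  have n_x2x2 : ¬ m ∣ (p * q ^ b) * (p * q ^ b) := by
    have h := ndvd' hrpos hdr hc (nd2' hr hRP hRQ 2 (b + b))
    have e : (p * q ^ b) * (p * q ^ b) = r ^ 0 * (p ^ 2 * q ^ (b + b)) := by ring
    rw [e]; exact h
  -- ZMod elements
  set X1 : ZMod m := ((q ^ b * r ^ c : ℕ) : ZMod m) with hX1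
  set Y1 : ZMod m := ((p ^ (A + 2) : ℕ) : ZMod m) with hY1
  set X2 : ZMod m := ((p * q ^ b : ℕ) : ZMod m) with hX2
  set Y2 : ZMod m := ((p ^ (A + 1) * r ^ c : ℕ) : ZMod m) with hY2
  have zmod_zero : ∀ k : ℕ, m ∣ k → ((k : ZMod m) = 0) := fun k hk =>
    (ZMod.natCast_eq_zero_iff k m).mpr hk
  have zmod_ne : ∀ k : ℕ, ¬ m ∣ k → ((k : ZMod m) ≠ 0) := fun k hk h =>
    hk ((ZMod.natCast_eq_zero_iff k m).mp h)
  have Z1 : X1 * Y1 = 0 := by rw [hX1, hY1, ← Nat.cast_mul]; exact zmod_zero _ z1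
  have Z2 : X2 * Y2 = 0 := by rw [hX2, hY2, ← Nat.cast_mul]; exact zmod_zero _ z2
  have NX1 : X1 ≠ 0 := zmod_ne _ n_x1
  have NY1 : Y1 ≠ 0 := zmod_ne _ n_y1
  have NX2 : X2 ≠ 0 := zmod_ne _ n_x2
  have NY2 : Y2 ≠ 0 := zmod_ne _ n_y2
  have NX1X1 : X1 * X1 ≠ 0 := by rw [hX1, ← Nat.cast_mul]; exact zmod_ne _ n_x1x1
  have NX1X2 : X1 * X2 ≠ 0 := by rw [hX1, hX2, ← Nat.cast_mul]; exact zmod_ne _ n_x1x2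
  have NX1Y2 : X1 * Y2 ≠ 0 := by rw [hX1, hY2, ← Nat.cast_mul]; exact zmod_ne _ n_x1y2
  have NY1X2 : Y1 * X2 ≠ 0 := by rw [hY1, hX2, ← Nat.cast_mul]; exact zmod_ne _ n_y1x2
  have NY1Y2 : Y1 * Y2 ≠ 0 := by rw [hY1, hY2, ← Nat.cast_mul]; exact zmod_ne _ n_y1y2
  have NX2X2 : X2 * X2 ≠ 0 := by rw [hX2, ← Nat.cast_mul]; exact zmod_ne _ n_x2x2
  -- distinctness
  have dab : X1 ≠ Y1 := by intro h; apply NX1X1; nth_rewrite 2 [h]; exact Z1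
  have dac : X1 ≠ X2 := by intro h; apply NY1X2; rw [mul_comm, ← h]; exact Z1
  have dad : X1 ≠ Y2 := by intro h; apply NY1Y2; rw [mul_comm, ← h]; exact Z1
  have dbc : Y1 ≠ X2 := by intro h; apply NX1X2; rw [← h]; exact Z1
  have dbd : Y1 ≠ Y2 := by intro h; apply NX1Y2; rw [← h]; exact Z1
  have dcd : X2 ≠ Y2 := by intro h; apply NX2X2; nth_rewrite 2 [h]; exact Z2
  -- vertices
  refine ⟨⟨X1, NX1, Y1, NY1, Z1⟩, ⟨Y1, NY1, X1, NX1, by rw [mul_comm]; exact Z1⟩,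
    ⟨X2, NX2, Y2, NY2, Z2⟩, ⟨Y2, NY2, X2, NX2, by rw [mul_comm]; exact Z2⟩,
    fun h => dab (Subtype.ext_iff.mp h), fun h => dac (Subtype.ext_iff.mp h),
    fun h => dad (Subtype.ext_iff.mp h), fun h => dbc (Subtype.ext_iff.mp h),
    fun h => dbd (Subtype.ext_iff.mp h), fun h => dcd (Subtype.ext_iff.mp h),
    ⟨fun h => dab (Subtype.ext_iff.mp h), Z1⟩, ⟨fun h => dcd (Subtype.ext_iff.mp h), Z2⟩,
    fun h => NX1X2 h.2, fun h => NX1Y2 h.2, fun h => NY1X2 h.2, fun h => NY1Y2 h.2⟩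

lemma matching_not_cochordal {V : Type*} {G : SimpleGraph V}
    (h : HasInducedMatchingTwo G) : ¬ IsCochordal G := by
  obtain ⟨a, b, c, d, hab, hac, had, hbc, hbd, hcd, eab, ecd, nac, nad, nbc, nbd⟩ := h
  intro hch
  apply hch 4 le_rfl
  have h4 : ∀ k : ZMod 4, k = 0 ∨ k = 1 ∨ k = 2 ∨ k = 3 := by decide
  have q10 : ¬(1 : ZMod 4) = 0 := by decide
  have q20 : ¬(2 : ZMod 4) = 0 := by decide
  have q21 : ¬(2 : ZMod 4) = 1 := by decide
  have q30 : ¬(3 : ZMod 4) = 0 := by decide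
  have q31 : ¬(3 : ZMod 4) = 1 := by decide
  have q32 : ¬(3 : ZMod 4) = 2 := by decide
  classical
  refine ⟨fun i => if i = 0 then a else if i = 1 then c else if i = 2 then b else d, ?_, ?_⟩
  · intro i j hij
    rcases h4 i with rfl | rfl | rfl | rfl <;> rcases h4 j with rfl | rfl | rfl | rfl <;>
      simp only [if_pos, if_neg, eq_self_iff_true, if_true, q10, q20, q21, q30, q31, q32,
        not_false_iff, if_false] at hij ⊢ <;>
      (first
        | rfl
        | exact absurd hij hab | exact absurd hij.symm hab
        | exact absurd hij hac | exact absurd hij.symm hac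
        | exact absurd hij had | exact absurd hij.symm had
        | exact absurd hij hbc | exact absurd hij.symm hbc
        | exact absurd hij hbd | exact absurd hij.symm hbd
        | exact absurd hij hcd | exact absurd hij.symm hcd)
  · intro i j
    have nca : ¬G.Adj c a := fun h => nac h.symm
    have nda : ¬G.Adj d a := fun h => nad h.symm
    have ncb : ¬G.Adj c b := fun h => nbc h.symm
    have ndb : ¬G.Adj d b := fun h => nbd h.symm
    rcases h4 i with rfl | rfl | rfl | rfl <;> rcases h4 j with rfl | rfl | rfl | rfl <;>
      simp only [SimpleGraph.compl_adj, if_pos, if_neg, eq_self_iff_true, if_true,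
        q10, q20, q21, q30, q31, q32, not_false_iff, if_false] <;>
      simp [hab, hac, had, hbc, hbd, hcd,
        hab.symm, hac.symm, had.symm, hbc.symm, hbd.symm, hcd.symm,
        eab, ecd, eab.symm, ecd.symm, nac, nad, nbc, nbd, nca, nda, ncb, ndb] <;>
      decide

/-- If `n = p^a·q^b·r^c` with `p, q, r` distinct primes,
`a, b, c ≥ 1`, and at least one of `a, b, c` larger than one, then `Γ(ℤ/nℤ)` is
not cochordal; indeed it contains an induced matching of size two. -/
theorem zdGraph_zmod_three_primes_not_cochordal
    (p q r a b c : ℕ) (hp : p.Prime) (hq : q.Prime) (hr : r.Prime)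
    (hpq : p ≠ q) (hpr : p ≠ r) (hqr : q ≠ r)
    (ha : 1 ≤ a) (hb : 1 ≤ b) (hc : 1 ≤ c)
    (hone : 2 ≤ a ∨ 2 ≤ b ∨ 2 ≤ c) :
    ¬ IsCochordal (zdGraph (ZMod (p ^ a * q ^ b * r ^ c))) ∧
      HasInducedMatchingTwo (zdGraph (ZMod (p ^ a * q ^ b * r ^ c))) := by
  have main : HasInducedMatchingTwo (zdGraph (ZMod (p ^ a * q ^ b * r ^ c))) := by
    rcases hone with h2 | h2 | h2
    · obtain ⟨A, rfl⟩ : ∃ A, a = A + 2 := ⟨a - 2, by omega⟩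
      exact key_matching p q r b c A hp hq hr hpq hpr hqr hb hc
    · obtain ⟨B, rfl⟩ : ∃ B, b = B + 2 := ⟨b - 2, by omega⟩
      have e : p ^ a * q ^ (B + 2) * r ^ c = q ^ (B + 2) * p ^ a * r ^ c := by ring
      rw [e]
      exact key_matching q p r a c B hq hp hr hpq.symm hqr hpr ha hc
    · obtain ⟨C, rfl⟩ : ∃ C, c = C + 2 := ⟨c - 2, by omega⟩
      have e : p ^ a * q ^ b * r ^ (C + 2) = r ^ (C + 2) * p ^ a * q ^ b := by ring
      rw [e]
      exact key_matching r p q a b C hr hp hq hpr.symm hqr.symm hpq ha hb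
  exact ⟨matching_not_cochordal main, main⟩
end

section
/- Let n = p^a·q^b where p and q are distinct primes and a, b ≥ 2. Then the zero-divisor graph Γ(ℤ/nℤ) is not cochordal; indeed it contains an induced matching of size two. -/
lemma matching_to_cycle {V : Type*} (G : SimpleGraph V)
    (h : HasInducedMatchingTwo G) : HasInducedCycle Gᶜ 4 := by
  obtain ⟨a, b, c, d, hab, hac, had, hbc, hbd, hcd, Hab, Hcd, Nac, Nad, Nbc, Nbd⟩ := h
  have hcases : ∀ i : ZMod 4, i = 0 ∨ i = 1 ∨ i = 2 ∨ i = 3 := by decide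
  refine ⟨fun i => if i = 0 then a else if i = 1 then c else if i = 2 then b else d, ?_, ?_⟩
  · intro i j hij
    rcases hcases i with rfl | rfl | rfl | rfl <;> rcases hcases j with rfl | rfl | rfl | rfl <;>
      simp only [show ((0:ZMod 4) = 0) = True from by decide,
        show ((1:ZMod 4) = 0) = False from by decide, show ((1:ZMod 4) = 1) = True from by decide,
        show ((2:ZMod 4) = 0) = False from by decide, show ((2:ZMod 4) = 1) = False from by decide,
        show ((2:ZMod 4) = 2) = True from by decide, show ((3:ZMod 4) = 0) = False from by decide,
        show ((3:ZMod 4) = 1) = False from by decide, show ((3:ZMod 4) = 2) = False from by decide,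
        if_true, if_false] at hij <;>
      first
        | rfl
        | exact absurd hij (by assumption)
        | exact absurd hij.symm (by assumption)
  · intro i j
    rcases hcases i with rfl | rfl | rfl | rfl <;> rcases hcases j with rfl | rfl | rfl | rfl <;>
      simp only [show ((0:ZMod 4) = 0) = True from by decide,
        show ((1:ZMod 4) = 0) = False from by decide, show ((1:ZMod 4) = 1) = True from by decide,
        show ((2:ZMod 4) = 0) = False from by decide, show ((2:ZMod 4) = 1) = False from by decide,
        show ((2:ZMod 4) = 2) = True from by decide, show ((3:ZMod 4) = 0) = False from by decide,
        show ((3:ZMod 4) = 1) = False from by decide, show ((3:ZMod 4) = 2) = False from by decide,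
        if_true, if_false, SimpleGraph.compl_adj]
    · exact iff_of_false (fun h => h.1 rfl) (by decide)
    · exact iff_of_true ⟨hac, Nac⟩ (by decide)
    · exact iff_of_false (fun h => h.2 Hab) (by decide)
    · exact iff_of_true ⟨had, Nad⟩ (by decide)
    · exact iff_of_true ⟨Ne.symm hac, fun h => Nac h.symm⟩ (by decide)
    · exact iff_of_false (fun h => h.1 rfl) (by decide)
    · exact iff_of_true ⟨Ne.symm hbc, fun h => Nbc h.symm⟩ (by decide)
    · exact iff_of_false (fun h => h.2 Hcd) (by decide)
    · exact iff_of_false (fun h => h.2 Hab.symm) (by decide)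
    · exact iff_of_true ⟨hbc, Nbc⟩ (by decide)
    · exact iff_of_false (fun h => h.1 rfl) (by decide)
    · exact iff_of_true ⟨hbd, Nbd⟩ (by decide)
    · exact iff_of_true ⟨Ne.symm had, fun h => Nad h.symm⟩ (by decide)
    · exact iff_of_false (fun h => h.2 Hcd.symm) (by decide)
    · exact iff_of_true ⟨Ne.symm hbd, fun h => Nbd h.symm⟩ (by decide)
    · exact iff_of_false (fun h => h.1 rfl) (by decide)

lemma aux_ndvd {p q : ℕ} (hp : p.Prime) (hq : q.Prime) (hpq : p ≠ q)
    {i j b : ℕ} (hj : j < b) : ¬ q ^ b ∣ p ^ i * q ^ j := by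
  intro h
  have hco : Nat.Coprime (q ^ b) (p ^ i) :=
    Nat.Coprime.pow b i ((Nat.coprime_primes hq hp).mpr (Ne.symm hpq))
  have h2 : q ^ b ∣ q ^ j := hco.dvd_of_dvd_mul_left h
  exact absurd ((Nat.pow_dvd_pow_iff_le_right hq.one_lt).mp h2) (by omega)

theorem zd_main_matching
    (p q a b : ℕ) (hp : p.Prime) (hq : q.Prime) (hpq : p ≠ q)
    (ha : 2 ≤ a) (hb : 2 ≤ b) :
    HasInducedMatchingTwo (zdGraph (ZMod (p ^ a * q ^ b))) := by
  obtain ⟨a, rfl⟩ : ∃ a', a = a' + 2 := ⟨a - 2, by omega⟩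
  obtain ⟨b, rfl⟩ : ∃ b', b = b' + 2 := ⟨b - 2, by omega⟩
  have hp2 := hp.two_le
  have hq2 := hq.two_le
  -- non-divisibility helpers
  have ndvd : ∀ i j : ℕ, j < b + 2 → ¬ p ^ (a+2) * q ^ (b+2) ∣ p ^ i * q ^ j :=
    fun i j hj h => aux_ndvd hp hq hpq hj (dvd_trans (dvd_mul_left _ _) h)
  have ndvd' : ∀ i j : ℕ, i < a + 2 → ¬ p ^ (a+2) * q ^ (b+2) ∣ p ^ i * q ^ j := by
    intro i j hi h
    have h1 : p ^ (a+2) ∣ p ^ i * q ^ j := dvd_trans (dvd_mul_right _ _) h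
    exact aux_ndvd hq hp (Ne.symm hpq) hi (by rwa [mul_comm] at h1)
  -- plain nat abbreviations (as equalities for rewriting products)
  have hAB : p ^ (a+2) * q ^ (b+2) ∣ p ^ (a+2) * q ^ (b+2) := dvd_refl _
  have hCD : p ^ (a+2) * q ^ (b+2) ∣ (p ^ (a+1) * q ^ (b+1)) * (p * q) := ⟨1, by ring⟩
  have hAC : ¬ p ^ (a+2) * q ^ (b+2) ∣ p ^ (a+2) * (p ^ (a+1) * q ^ (b+1)) := by
    have := ndvd (2 * a + 3) (b + 1) (by omega)
    rwa [show p ^ (2*a+3) * q ^ (b+1) = p ^ (a+2) * (p ^ (a+1) * q ^ (b+1)) by ring] at this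
  have hAD : ¬ p ^ (a+2) * q ^ (b+2) ∣ p ^ (a+2) * (p * q) := by
    have := ndvd (a + 3) 1 (by omega)
    rwa [show p ^ (a+3) * q ^ 1 = p ^ (a+2) * (p * q) by ring] at this
  have hBC : ¬ p ^ (a+2) * q ^ (b+2) ∣ q ^ (b+2) * (p ^ (a+1) * q ^ (b+1)) := by
    have := ndvd' (a + 1) (2 * b + 3) (by omega)
    rwa [show p ^ (a+1) * q ^ (2*b+3) = q ^ (b+2) * (p ^ (a+1) * q ^ (b+1)) by ring] at this
  have hBD : ¬ p ^ (a+2) * q ^ (b+2) ∣ q ^ (b+2) * (p * q) := by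
    have := ndvd' 1 (b + 3) (by omega)
    rwa [show p ^ 1 * q ^ (b+3) = q ^ (b+2) * (p * q) by ring] at this
  have hAA : ¬ p ^ (a+2) * q ^ (b+2) ∣ p ^ (a+2) * p ^ (a+2) := by
    have := ndvd (2 * (a + 2)) 0 (by omega)
    rwa [show p ^ (2*(a+2)) * q ^ 0 = p ^ (a+2) * p ^ (a+2) by ring] at this
  have hA0 : ¬ p ^ (a+2) * q ^ (b+2) ∣ p ^ (a+2) := by
    have := ndvd (a + 2) 0 (by omega)
    rwa [show p ^ (a+2) * q ^ 0 = p ^ (a+2) by ring] at this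
  have hB0 : ¬ p ^ (a+2) * q ^ (b+2) ∣ q ^ (b+2) := by
    have := ndvd' 0 (b + 2) (by omega)
    rwa [show p ^ 0 * q ^ (b+2) = q ^ (b+2) by ring] at this
  have hC0 : ¬ p ^ (a+2) * q ^ (b+2) ∣ p ^ (a+1) * q ^ (b+1) := ndvd (a+1) (b+1) (by omega)
  have hD0 : ¬ p ^ (a+2) * q ^ (b+2) ∣ p * q := by
    have := ndvd 1 1 (by omega)
    rwa [show p ^ 1 * q ^ 1 = p * q by ring] at this
  have hApD : ¬ p ^ (a+2) * q ^ (b+2) ∣ p ^ (a+2) + p * q := by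
    intro h
    have hqN : q ∣ p ^ (a+2) * q ^ (b+2) :=
      Dvd.dvd.mul_left (dvd_pow_self q (by omega)) _
    have h1 : q ∣ p ^ (a+2) + p * q := hqN.trans h
    have h2 : q ∣ p * q := dvd_mul_left q p
    have h3 : q ∣ p ^ (a+2) := (Nat.dvd_add_iff_left h2).mpr h1
    exact hpq (((Nat.prime_dvd_prime_iff_eq hq hp).mp (hq.dvd_of_dvd_pow h3)).symm)
  have hBpD : ¬ p ^ (a+2) * q ^ (b+2) ∣ q ^ (b+2) + p * q := by
    intro h
    have hpN : p ∣ p ^ (a+2) * q ^ (b+2) :=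
      Dvd.dvd.mul_right (dvd_pow_self p (by omega)) _
    have h1 : p ∣ q ^ (b+2) + p * q := hpN.trans h
    have h2 : p ∣ p * q := dvd_mul_right p q
    have h3 : p ∣ q ^ (b+2) := (Nat.dvd_add_iff_left h2).mpr h1
    exact hpq ((Nat.prime_dvd_prime_iff_eq hp hq).mp (hp.dvd_of_dvd_pow h3))
  have hCpD : ¬ p ^ (a+2) * q ^ (b+2) ∣ p ^ (a+1) * q ^ (b+1) + p * q := by
    have hDleC : p * q ≤ p ^ (a+1) * q ^ (b+1) :=
      Nat.mul_le_mul (Nat.le_self_pow (by omega) _) (Nat.le_self_pow (by omega) _)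
    have h2C : p ^ (a+1) * q ^ (b+1) + p * q ≤ p * (p ^ (a+1) * q ^ (b+1)) := by
      calc p ^ (a+1) * q ^ (b+1) + p * q ≤ 2 * (p ^ (a+1) * q ^ (b+1)) := by omega
        _ ≤ p * (p ^ (a+1) * q ^ (b+1)) := Nat.mul_le_mul_right _ hp2
    have hpC : p * (p ^ (a+1) * q ^ (b+1)) < p ^ (a+2) * q ^ (b+2) := by
      rw [show p * (p ^ (a+1) * q ^ (b+1)) = p ^ (a+2) * q ^ (b+1) by ring]
      exact mul_lt_mul_of_pos_left (Nat.pow_lt_pow_right hq.one_lt (by omega)) (by positivity)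
    exact Nat.not_dvd_of_pos_of_lt (by positivity) (by omega)
  -- move to ZMod
  have key : ∀ m : ℕ, ((m : ZMod (p ^ (a+2) * q ^ (b+2))) = 0) ↔ p ^ (a+2) * q ^ (b+2) ∣ m :=
    fun m => ZMod.natCast_eq_zero_iff m _
  set R := ZMod (p ^ (a+2) * q ^ (b+2)) with hR
  let x₁ : R := ((p ^ (a+2) : ℕ) : R)
  let x₂ : R := ((q ^ (b+2) : ℕ) : R)
  let x₃ : R := ((p ^ (a+1) * q ^ (b+1) : ℕ) : R)
  let x₄ : R := -((p * q : ℕ) : R)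
  have e12 : x₁ * x₂ = 0 := by
    show ((p ^ (a+2) : ℕ) : R) * ((q ^ (b+2) : ℕ) : R) = 0
    rw [← Nat.cast_mul, key]
  have e34 : x₃ * x₄ = 0 := by
    show ((p ^ (a+1) * q ^ (b+1) : ℕ) : R) * -((p * q : ℕ) : R) = 0
    rw [mul_neg, neg_eq_zero, ← Nat.cast_mul, key]; exact hCD
  have n13 : x₁ * x₃ ≠ 0 := by
    show ((p ^ (a+2) : ℕ) : R) * ((p ^ (a+1) * q ^ (b+1) : ℕ) : R) ≠ 0
    rw [← Nat.cast_mul, Ne, key]; exact hAC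
  have n14 : x₁ * x₄ ≠ 0 := by
    show ((p ^ (a+2) : ℕ) : R) * -((p * q : ℕ) : R) ≠ 0
    rw [mul_neg, neg_ne_zero, ← Nat.cast_mul, Ne, key]; exact hAD
  have n23 : x₂ * x₃ ≠ 0 := by
    show ((q ^ (b+2) : ℕ) : R) * ((p ^ (a+1) * q ^ (b+1) : ℕ) : R) ≠ 0
    rw [← Nat.cast_mul, Ne, key]; exact hBC
  have n24 : x₂ * x₄ ≠ 0 := by
    show ((q ^ (b+2) : ℕ) : R) * -((p * q : ℕ) : R) ≠ 0
    rw [mul_neg, neg_ne_zero, ← Nat.cast_mul, Ne, key]; exact hBD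
  have n11 : x₁ * x₁ ≠ 0 := by
    show ((p ^ (a+2) : ℕ) : R) * ((p ^ (a+2) : ℕ) : R) ≠ 0
    rw [← Nat.cast_mul, Ne, key]; exact hAA
  have nz1 : x₁ ≠ 0 := by show ((p ^ (a+2) : ℕ) : R) ≠ 0; rw [Ne, key]; exact hA0
  have nz2 : x₂ ≠ 0 := by show ((q ^ (b+2) : ℕ) : R) ≠ 0; rw [Ne, key]; exact hB0
  have nz3 : x₃ ≠ 0 := by
    show ((p ^ (a+1) * q ^ (b+1) : ℕ) : R) ≠ 0; rw [Ne, key]; exact hC0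
  have nz4 : x₄ ≠ 0 := by
    show -((p * q : ℕ) : R) ≠ 0; rw [neg_ne_zero, Ne, key]; exact hD0
  have ne12 : x₁ ≠ x₂ := fun h => n11 (by rw [← e12, h])
  have ne13 : x₁ ≠ x₃ := fun h => n14 (by rw [h, mul_comm x₃ x₄] at *; exact e34)
  have ne14 : x₁ ≠ x₄ := by
    intro h
    have : ((p ^ (a+2) : ℕ) : R) + ((p * q : ℕ) : R) = 0 := by
      rw [show ((p ^ (a+2) : ℕ) : R) = x₄ from h]; ring
    rw [← Nat.cast_add, key] at this
    exact hApD this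
  have ne23 : x₂ ≠ x₃ := fun h => n24 (by rw [h]; exact e34)
  have ne24 : x₂ ≠ x₄ := by
    intro h
    have : ((q ^ (b+2) : ℕ) : R) + ((p * q : ℕ) : R) = 0 := by
      rw [show ((q ^ (b+2) : ℕ) : R) = x₄ from h]; ring
    rw [← Nat.cast_add, key] at this
    exact hBpD this
  have ne34 : x₃ ≠ x₄ := by
    intro h
    have : ((p ^ (a+1) * q ^ (b+1) : ℕ) : R) + ((p * q : ℕ) : R) = 0 := by
      rw [show ((p ^ (a+1) * q ^ (b+1) : ℕ) : R) = x₄ from h]; ring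
    rw [← Nat.cast_add, key] at this
    exact hCpD this
  have m1 : x₁ ∈ nzdSet R := ⟨nz1, x₂, nz2, e12⟩
  have m2 : x₂ ∈ nzdSet R := ⟨nz2, x₁, nz1, by rw [mul_comm]; exact e12⟩
  have m3 : x₃ ∈ nzdSet R := ⟨nz3, x₄, nz4, e34⟩
  have m4 : x₄ ∈ nzdSet R := ⟨nz4, x₃, nz3, by rw [mul_comm]; exact e34⟩
  refine ⟨⟨x₁, m1⟩, ⟨x₂, m2⟩, ⟨x₃, m3⟩, ⟨x₄, m4⟩, ?_, ?_, ?_, ?_, ?_, ?_,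
    ⟨?_, e12⟩, ⟨?_, e34⟩, ?_, ?_, ?_, ?_⟩
  · exact fun h => ne12 (congrArg Subtype.val h)
  · exact fun h => ne13 (congrArg Subtype.val h)
  · exact fun h => ne14 (congrArg Subtype.val h)
  · exact fun h => ne23 (congrArg Subtype.val h)
  · exact fun h => ne24 (congrArg Subtype.val h)
  · exact fun h => ne34 (congrArg Subtype.val h)
  · exact fun h => ne12 (congrArg Subtype.val h)
  · exact fun h => ne34 (congrArg Subtype.val h)
  · exact fun h => n13 h.2
  · exact fun h => n14 h.2
  · exact fun h => n23 h.2
  · exact fun h => n24 h.2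

/-- If `n = p^a·q^b` with `p, q` distinct primes and `a, b ≥ 2`,
then `Γ(ℤ/nℤ)` is not cochordal; indeed it contains an induced matching of size two. -/
theorem zdGraph_zmod_two_primes_not_cochordal
    (p q a b : ℕ) (hp : p.Prime) (hq : q.Prime) (hpq : p ≠ q)
    (ha : 2 ≤ a) (hb : 2 ≤ b) :
    ¬ IsCochordal (zdGraph (ZMod (p ^ a * q ^ b))) ∧
      HasInducedMatchingTwo (zdGraph (ZMod (p ^ a * q ^ b))) := by
  have hm := zd_main_matching p q a b hp hq hpq ha hb
  exact ⟨fun hco => hco 4 (by norm_num) (matching_to_cycle _ hm), hm⟩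
end

section
/- For all integers q ≥ 2 and L ≥ 2, the layered chain graph C(q,L) is chordal and cochordal: neither C(q,L) nor its complement contains an induced cycle of length at least 4. -/
/-- Vertex type of the layered chain graph `C(q,L)`: a vertex is a pair `(k, j)`
where `k` is its layer (`1 ≤ k ≤ L-1`) and `j` indexes the `(q-1)·q^(L-k-1)`
vertices of layer `V_k`. -/
abbrev ChainVert (q L : ℕ) :=
  {v : ℕ × ℕ // 1 ≤ v.1 ∧ v.1 ≤ L - 1 ∧ v.2 < (q - 1) * q ^ (L - v.1 - 1)}

/-- The layered chain graph `C(q,L)`: distinct vertices in layers `k` and `ℓ`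
are adjacent iff `k + ℓ ≥ L`. -/
def chainGraph (q L : ℕ) : SimpleGraph (ChainVert q L) where
  Adj x y := x ≠ y ∧ L ≤ x.val.1 + y.val.1
  symm := by
    constructor
    rintro x y ⟨h1, h2⟩
    exact ⟨h1.symm, by omega⟩
  loopless := ⟨fun x h => h.1 rfl⟩

lemma zmod_ne_of (n a b : ℕ) (h : ¬ (a % n = b % n)) : (a : ZMod n) ≠ (b : ZMod n) := by
  rw [Ne, ZMod.natCast_eq_natCast_iff']; exact h

lemma zmod_ne_of' (n a b : ℕ) (ha : a < n) (hb : b < n) (h : a ≠ b) :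
    (a : ZMod n) ≠ (b : ZMod n) :=
  zmod_ne_of n a b (by rw [Nat.mod_eq_of_lt ha, Nat.mod_eq_of_lt hb]; exact h)

section NumeralFacts
variable {n : ℕ} (hn : 4 ≤ n)
include hn

lemma zm_2_ne_01 : (2 : ZMod n) ≠ 0 + 1 := by
  have := zmod_ne_of' n 2 1 (by omega) (by omega) (by omega)
  push_cast at this; simpa using this

lemma zm_0_ne_21 : (0 : ZMod n) ≠ 2 + 1 := by
  have := zmod_ne_of' n 0 3 (by omega) (by omega) (by omega)
  push_cast at this; simpa [show (2:ZMod n)+1 = 3 by ring] using this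

lemma zm_1_ne_31 : (1 : ZMod n) ≠ 3 + 1 := by
  have h4 : 4 % n = 0 ∨ 4 % n = 4 := by
    rcases Nat.eq_or_lt_of_le hn with h | h
    · left; rw [← h]
    · right; exact Nat.mod_eq_of_lt h
  have := zmod_ne_of n 1 4 (by rw [Nat.mod_eq_of_lt (by omega : 1 < n)]; omega)
  push_cast at this; simpa [show (3:ZMod n)+1 = 4 by ring] using this

lemma zm_3_ne_11 : (3 : ZMod n) ≠ 1 + 1 := by
  have := zmod_ne_of' n 3 2 (by omega) (by omega) (by omega)
  push_cast at this; simpa [show (1:ZMod n)+1 = 2 by ring] using this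

lemma zm_0_ne_2 : (0 : ZMod n) ≠ 2 := by
  have := zmod_ne_of' n 0 2 (by omega) (by omega) (by omega)
  push_cast at this; exact this

lemma zm_1_ne_3 : (1 : ZMod n) ≠ 3 := by
  have := zmod_ne_of' n 1 3 (by omega) (by omega) (by omega)
  push_cast at this; exact this

end NumeralFacts

/-- For all `q ≥ 2` and `L ≥ 2`, the layered chain graph
`C(q,L)` is chordal and cochordal: neither it nor its complement has an induced
cycle of length at least `4`. -/
theorem chainGraph_chordal_and_cochordal (q L : ℕ) (hq : 2 ≤ q) (hL : 2 ≤ L) :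
    IsChordal (chainGraph q L) ∧ IsCochordal (chainGraph q L) := by
  constructor
  · intro n hn h
    obtain ⟨f, hinj, hf⟩ := h
    -- edges of the cycle
    have A01 := (hf 0 1).2 (Or.inl (zero_add 1).symm)
    have A12 := (hf 1 2).2 (Or.inl one_add_one_eq_two.symm)
    have A23 := (hf 2 3).2 (Or.inl two_add_one_eq_three.symm)
    -- chords are absent
    have N02 : ¬ (chainGraph q L).Adj (f 0) (f 2) := by
      rw [hf]
      rintro (h | h)
      · exact zm_2_ne_01 hn h
      · exact zm_0_ne_21 hn h
    have N13 : ¬ (chainGraph q L).Adj (f 1) (f 3) := by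
      rw [hf]
      rintro (h | h)
      · exact zm_3_ne_11 hn h
      · exact zm_1_ne_31 hn h
    have ne02 : f 0 ≠ f 2 := fun h => zm_0_ne_2 hn (hinj h)
    have ne13 : f 1 ≠ f 3 := fun h => zm_1_ne_3 hn (hinj h)
    have h02 : (f 0).val.1 + (f 2).val.1 < L := by
      by_contra hc; exact N02 ⟨ne02, by omega⟩
    have h13 : (f 1).val.1 + (f 3).val.1 < L := by
      by_contra hc; exact N13 ⟨ne13, by omega⟩
    have e01 : L ≤ (f 0).val.1 + (f 1).val.1 := A01.2
    have e12 : L ≤ (f 1).val.1 + (f 2).val.1 := A12.2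
    have e23 : L ≤ (f 2).val.1 + (f 3).val.1 := A23.2
    omega
  · intro n hn h
    obtain ⟨f, hinj, hf⟩ := h
    have A01 := (hf 0 1).2 (Or.inl (zero_add 1).symm)
    have A12 := (hf 1 2).2 (Or.inl one_add_one_eq_two.symm)
    have A23 := (hf 2 3).2 (Or.inl two_add_one_eq_three.symm)
    have N02 : ¬ (chainGraph q L)ᶜ.Adj (f 0) (f 2) := by
      rw [hf]
      rintro (h | h)
      · exact zm_2_ne_01 hn h
      · exact zm_0_ne_21 hn h
    have N13 : ¬ (chainGraph q L)ᶜ.Adj (f 1) (f 3) := by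
      rw [hf]
      rintro (h | h)
      · exact zm_3_ne_11 hn h
      · exact zm_1_ne_31 hn h
    have ne02 : f 0 ≠ f 2 := fun h => zm_0_ne_2 hn (hinj h)
    have ne13 : f 1 ≠ f 3 := fun h => zm_1_ne_3 hn (hinj h)
    -- complement edges mean the layer sums are small
    have e01 : (f 0).val.1 + (f 1).val.1 < L := by
      have := A01.2; simp only [chainGraph] at this
      by_contra hc
      exact this ⟨A01.1, by omega⟩
    have e12 : (f 1).val.1 + (f 2).val.1 < L := by
      have := A12.2; simp only [chainGraph] at this
      by_contra hc
      exact this ⟨A12.1, by omega⟩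
    have e23 : (f 2).val.1 + (f 3).val.1 < L := by
      have := A23.2; simp only [chainGraph] at this
      by_contra hc
      exact this ⟨A23.1, by omega⟩
    -- absent complement chords mean the original edges are present
    have h02 : L ≤ (f 0).val.1 + (f 2).val.1 := by
      by_contra hc
      exact N02 ⟨ne02, fun hadj => by have := hadj.2; omega⟩
    have h13 : L ≤ (f 1).val.1 + (f 3).val.1 := by
      by_contra hc
      exact N13 ⟨ne13, fun hadj => by have := hadj.2; omega⟩
    omega
end

section
/- For every prime p and every integer c ≥ 2, the zero-divisor graph of 𝔽_p[x]/(x^c) is isomorphic, as a simple graph, to the zero-divisor graph of ℤ/p^cℤ: there is a bijection Ψ between the nonzero zero-divisors of 𝔽_p[x]/(x^c) and those of ℤ/p^cℤ such that for distinct f, g one has f·g = 0 if and only if Ψ(f)·Ψ(g) = 0. -/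
/-- The truncated polynomial ring `R_{p,c} = 𝔽_p[x]/(x^c)`. -/
abbrev truncR (p c : ℕ) : Type :=
  Polynomial (ZMod p) ⧸ Ideal.span {(Polynomial.X : Polynomial (ZMod p)) ^ c}

open Polynomial

/- ### Generic helper lemmas -/

theorem prime_pow_dvd_mul_split {α : Type*} [CommMonoidWithZero α] [IsCancelMulZero α] {q : α} (hq : Prime q) :
    ∀ (n : ℕ) (a b : α), q ^ n ∣ a * b → ∃ i j, i + j = n ∧ q ^ i ∣ a ∧ q ^ j ∣ b := by
  intro n
  induction n with
  | zero => exact fun a b _ => ⟨0, 0, rfl, by simpa using one_dvd a, by simpa using one_dvd b⟩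
  | succ n ih =>
    intro a b h
    have hq1 : q ∣ a * b := (dvd_pow_self q (Nat.succ_ne_zero n)).trans h
    rcases hq.2.2 a b hq1 with hA | hB
    · obtain ⟨a', rfl⟩ := hA
      have h2 : q ^ n ∣ a' * b := by
        rw [pow_succ', mul_assoc] at h
        exact (mul_dvd_mul_iff_left hq.ne_zero).mp h
      obtain ⟨i, j, hij, hi, hj⟩ := ih a' b h2
      exact ⟨i + 1, j, by omega, by rw [pow_succ']; exact mul_dvd_mul_left q hi, hj⟩
    · obtain ⟨b', rfl⟩ := hB
      have h2 : q ^ n ∣ a * b' := by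
        rw [pow_succ', mul_left_comm a q b'] at h
        exact (mul_dvd_mul_iff_left hq.ne_zero).mp h
      obtain ⟨i, j, hij, hi, hj⟩ := ih a b' h2
      exact ⟨i, j + 1, by omega, hi, by rw [pow_succ']; exact mul_dvd_mul_left q hj⟩

theorem pow_dvd_iff_digits {p : ℕ} (hp : 2 ≤ p) :
    ∀ (k n : ℕ), p ^ k ∣ n ↔ ∀ i < k, n / p ^ i % p = 0 := by
  intro k
  induction k with
  | zero => simp
  | succ k ih =>
    intro n
    have hppos : 0 < p ^ k := pow_pos (by omega) k
    constructor
    · intro h i hi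
      have hk : p ^ k ∣ n := dvd_trans (pow_dvd_pow p (Nat.le_succ k)) h
      rcases Nat.lt_succ_iff_lt_or_eq.mp hi with hik | rfl
      · exact (ih n).mp hk i hik
      · obtain ⟨m, rfl⟩ := h
        rw [pow_succ, mul_assoc, Nat.mul_div_cancel_left _ hppos]
        exact Nat.mul_mod_right p m
    · intro h
      have hk : p ^ k ∣ n := (ih n).mpr fun i hi => h i (hi.trans (Nat.lt_succ_self k))
      obtain ⟨m, rfl⟩ := hk
      have hd := h k (Nat.lt_succ_self k)
      rw [Nat.mul_div_cancel_left _ hppos] at hd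
      obtain ⟨m', rfl⟩ := Nat.dvd_of_mod_eq_zero hd
      exact ⟨m', by ring⟩

/- ### The truncated polynomial ring side -/

section Trunc
variable (p c : ℕ) [Fact p.Prime]

noncomputable def tgen : truncR p c := AdjoinRoot.root (X ^ c)

noncomputable def trep (x : truncR p c) : (ZMod p)[X] :=
  AdjoinRoot.modByMonicHom (monic_X_pow c) x

theorem mk_trep (x : truncR p c) : AdjoinRoot.mk (X ^ c) (trep p c x) = x :=
  AdjoinRoot.mk_leftInverse (monic_X_pow c) x

theorem trep_zero : trep p c 0 = 0 :=
  (AdjoinRoot.modByMonicHom (monic_X_pow c)).map_zero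

theorem tgen_pow_c : tgen p c ^ c = 0 := by
  have h := AdjoinRoot.mk_self (f := (X : (ZMod p)[X]) ^ c)
  rwa [map_pow, AdjoinRoot.mk_X] at h

theorem tgen_pow_dvd_iff (x : truncR p c) (k : ℕ) (hk : k ≤ c) :
    tgen p c ^ k ∣ x ↔ ∀ i < k, (trep p c x).coeff i = 0 := by
  rw [← X_pow_dvd_iff]
  constructor
  · rintro ⟨y, hy⟩
    obtain ⟨h, rfl⟩ := AdjoinRoot.mk_surjective y
    have hxy : x = AdjoinRoot.mk (X ^ c) (X ^ k * h) := by
      rw [hy, map_mul, map_pow, AdjoinRoot.mk_X]; rfl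
    have hmk : AdjoinRoot.mk (X ^ c) (trep p c x - X ^ k * h) = 0 := by
      rw [map_sub, mk_trep, hxy, sub_self]
    rw [AdjoinRoot.mk_eq_zero] at hmk
    have : X ^ k ∣ trep p c x - X ^ k * h := (pow_dvd_pow X hk).trans hmk
    have := dvd_add this (dvd_mul_right (X ^ k) h)
    simpa using this
  · rintro ⟨g, hg⟩
    refine ⟨AdjoinRoot.mk _ g, ?_⟩
    conv_lhs => rw [← mk_trep p c x]
    rw [hg, map_mul, map_pow, AdjoinRoot.mk_X]; rfl

theorem trunc_bridge (x y : truncR p c) :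
    x * y = 0 ↔ ∃ j k, j + k = c ∧ tgen p c ^ j ∣ x ∧ tgen p c ^ k ∣ y := by
  constructor
  · intro h
    obtain ⟨f, rfl⟩ := AdjoinRoot.mk_surjective x
    obtain ⟨g, rfl⟩ := AdjoinRoot.mk_surjective y
    have h' : AdjoinRoot.mk ((X : (ZMod p)[X]) ^ c) (f * g) = 0 := by rw [map_mul]; exact h
    rw [AdjoinRoot.mk_eq_zero] at h'
    obtain ⟨i, j, hij, hi, hj⟩ := prime_pow_dvd_mul_split prime_X c f g h'
    refine ⟨i, j, hij, ?_, ?_⟩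
    · obtain ⟨f', rfl⟩ := hi
      exact ⟨AdjoinRoot.mk _ f', by rw [map_mul, map_pow, AdjoinRoot.mk_X]; rfl⟩
    · obtain ⟨g', rfl⟩ := hj
      exact ⟨AdjoinRoot.mk _ g', by rw [map_mul, map_pow, AdjoinRoot.mk_X]; rfl⟩
  · rintro ⟨j, k, hjk, ⟨u, rfl⟩, ⟨v, rfl⟩⟩
    have : tgen p c ^ j * u * (tgen p c ^ k * v) = tgen p c ^ (j + k) * (u * v) := by
      rw [pow_add]; ring
    rw [this, hjk, tgen_pow_c, zero_mul]

noncomputable def E1 : truncR p c ≃ (Fin c → ZMod p) :=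
  ((AdjoinRoot.powerBasisAux' (monic_X_pow (R := ZMod p) (n := c))).equivFun.toEquiv).trans
    (Equiv.arrowCongr (finCongr (natDegree_X_pow c)) (Equiv.refl _))

theorem E1_apply (x : truncR p c) (i : Fin c) :
    E1 p c x i = (trep p c x).coeff (i : ℕ) := by
  rfl

theorem E1_cond (x : truncR p c) (k : ℕ) (hk : k ≤ c) :
    tgen p c ^ k ∣ x ↔ ∀ i : Fin c, (i : ℕ) < k → E1 p c x i = 0 := by
  rw [tgen_pow_dvd_iff p c x k hk]
  constructor
  · intro h i hi
    rw [E1_apply]; exact h i hi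
  · intro h i hi
    have := h ⟨i, lt_of_lt_of_le hi hk⟩ hi
    rwa [E1_apply] at this

end Trunc

/- ### The ZMod (p^c) side -/

section Zm
variable (p c : ℕ) [Fact p.Prime]

theorem pc_nezero : NeZero (p ^ c) :=
  ⟨pow_ne_zero _ (Fact.out (p := p.Prime)).ne_zero⟩

theorem zmod_pow_c : (p : ZMod (p ^ c)) ^ c = 0 := by
  rw [← Nat.cast_pow, ZMod.natCast_self]

theorem zmod_pow_dvd_iff (a : ZMod (p ^ c)) (k : ℕ) (hk : k ≤ c) :
    (p : ZMod (p ^ c)) ^ k ∣ a ↔ p ^ k ∣ a.val := by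
  haveI := pc_nezero p c
  constructor
  · rintro ⟨b, rfl⟩
    have hcast : ((p ^ k * b.val : ℕ) : ZMod (p ^ c)) = (p : ZMod (p ^ c)) ^ k * b := by
      push_cast
      rw [ZMod.natCast_rightInverse b]
    rw [← hcast, ZMod.val_natCast]
    exact (Nat.dvd_mod_iff (pow_dvd_pow p hk)).mpr (dvd_mul_right _ _)
  · rintro ⟨m, hm⟩
    refine ⟨(m : ZMod (p ^ c)), ?_⟩
    have h := ZMod.natCast_rightInverse (n := p ^ c) a
    rw [← h, hm]
    push_cast
    ring

theorem zmod_bridge (a b : ZMod (p ^ c)) :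
    a * b = 0 ↔ ∃ j k, j + k = c ∧ (p : ZMod (p ^ c)) ^ j ∣ a ∧ (p : ZMod (p ^ c)) ^ k ∣ b := by
  haveI := pc_nezero p c
  constructor
  · intro h
    have hcast : ((a.val * b.val : ℕ) : ZMod (p ^ c)) = 0 := by
      push_cast
      rw [ZMod.natCast_rightInverse a, ZMod.natCast_rightInverse b, h]
    rw [ZMod.natCast_eq_zero_iff] at hcast
    obtain ⟨i, j, hij, hi, hj⟩ :=
      prime_pow_dvd_mul_split (Nat.Prime.prime (Fact.out (p := p.Prime))) c _ _ hcast
    exact ⟨i, j, hij, (zmod_pow_dvd_iff p c a i (by omega)).mpr hi,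
      (zmod_pow_dvd_iff p c b j (by omega)).mpr hj⟩
  · rintro ⟨j, k, hjk, ⟨u, rfl⟩, ⟨v, rfl⟩⟩
    have : (p : ZMod (p ^ c)) ^ j * u * ((p : ZMod (p ^ c)) ^ k * v)
        = (p : ZMod (p ^ c)) ^ (j + k) * (u * v) := by rw [pow_add]; ring
    rw [this, hjk, zmod_pow_c, zero_mul]

/-- `ZMod n ≃ Fin n`. -/
def zmodFin (N : ℕ) [NeZero N] : ZMod N ≃ Fin N where
  toFun a := ⟨a.val, ZMod.val_lt a⟩
  invFun i := ((i : ℕ) : ZMod N)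
  left_inv a := ZMod.natCast_rightInverse a
  right_inv i := by
    ext
    simp [ZMod.val_natCast, Nat.mod_eq_of_lt i.isLt]

noncomputable def E2 : ZMod (p ^ c) ≃ (Fin c → ZMod p) :=
  haveI : NeZero (p ^ c) := pc_nezero p c
  haveI : NeZero p := ⟨(Fact.out (p := p.Prime)).ne_zero⟩
  ((zmodFin (p ^ c)).trans finFunctionFinEquiv.symm).trans
    (Equiv.arrowCongr (Equiv.refl _) (zmodFin p).symm)

theorem E2_apply (a : ZMod (p ^ c)) (i : Fin c) :
    E2 p c a i = ((a.val / p ^ (i : ℕ) % p : ℕ) : ZMod p) := by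
  simp [E2, zmodFin]

theorem E2_cond (a : ZMod (p ^ c)) (k : ℕ) (hk : k ≤ c) :
    (p : ZMod (p ^ c)) ^ k ∣ a ↔ ∀ i : Fin c, (i : ℕ) < k → E2 p c a i = 0 := by
  have hp2 : 2 ≤ p := (Fact.out (p := p.Prime)).two_le
  haveI : NeZero p := ⟨(Fact.out (p := p.Prime)).ne_zero⟩
  rw [zmod_pow_dvd_iff p c a k hk, pow_dvd_iff_digits hp2]
  have key : ∀ m : ℕ, ((m % p : ℕ) : ZMod p) = 0 ↔ m % p = 0 := by
    intro m
    rw [ZMod.natCast_eq_zero_iff]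
    constructor
    · intro h
      exact Nat.eq_zero_of_dvd_of_lt h (Nat.mod_lt _ (by omega))
    · intro h; rw [h]; exact dvd_zero p
  constructor
  · intro h i hi
    rw [E2_apply]
    exact (key _).mpr (h i hi)
  · intro h i hi
    have := h ⟨i, lt_of_lt_of_le hi hk⟩ hi
    rw [E2_apply] at this
    exact (key _).mp this

end Zm

/- ### Generic membership characterization -/

theorem mem_nzd_char {R : Type*} [CommRing R] {p c : ℕ} [Fact p.Prime] (hc : 2 ≤ c)
    (e : R ≃ (Fin c → ZMod p)) (he0 : e 0 = 0)
    (hb : ∀ x y : R, x * y = 0 ↔ ∃ j k, j + k = c ∧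
      (∀ i : Fin c, (i : ℕ) < j → e x i = 0) ∧ (∀ i : Fin c, (i : ℕ) < k → e y i = 0)) :
    ∀ x : R, x ∈ nzdSet R ↔ (e x ≠ 0 ∧ ∀ i : Fin c, (i : ℕ) < 1 → e x i = 0) := by
  haveI : NeZero p := ⟨(Fact.out (p := p.Prime)).ne_zero⟩
  intro x
  constructor
  · rintro ⟨hx0, y, hy0, hxy⟩
    refine ⟨fun h => hx0 (e.injective (h.trans he0.symm)), ?_⟩
    obtain ⟨j, k, hjk, hx, hy⟩ := (hb x y).mp hxy
    intro i hi
    rcases Nat.eq_zero_or_pos j with rfl | hj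
    · exfalso
      apply hy0
      apply e.injective
      rw [he0]
      funext i'
      exact hy i' (by omega)
    · exact hx i (by omega)
  · rintro ⟨hx0, hx⟩
    refine ⟨fun h => hx0 (by rw [h, he0]), ?_⟩
    refine ⟨e.symm (Pi.single ⟨c - 1, by omega⟩ 1), ?_, ?_⟩
    · intro h
      have h2 : (Pi.single (⟨c - 1, by omega⟩ : Fin c) (1 : ZMod p) : Fin c → ZMod p) = 0 := by
        rw [← e.apply_symm_apply (Pi.single (⟨c - 1, by omega⟩ : Fin c) (1 : ZMod p)), h, he0]
      have h3 := congrFun h2 ⟨c - 1, by omega⟩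
      rw [Pi.single_eq_same] at h3
      exact one_ne_zero h3
    · apply (hb _ _).mpr
      refine ⟨1, c - 1, by omega, hx, ?_⟩
      intro i hi
      rw [e.apply_symm_apply]
      exact Pi.single_eq_of_ne (Fin.ne_of_val_ne (show (i : ℕ) ≠ c - 1 by omega)) 1

/-- For every prime `p` and `c ≥ 2`, the zero-divisor graph of
`𝔽_p[x]/(x^c)` is isomorphic to the zero-divisor graph of `ℤ/p^cℤ`: there is a
bijection `Ψ` between the nonzero zero-divisors such that for distinct `f, g`
one has `f·g = 0` iff `Ψ(f)·Ψ(g) = 0`. -/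
theorem truncR_zdGraph_iso_zmod (p c : ℕ) (hp : p.Prime) (hc : 2 ≤ c) :
    ∃ Ψ : nzdSet (truncR p c) ≃ nzdSet (ZMod (p ^ c)),
      ∀ f g : nzdSet (truncR p c), f ≠ g →
        ((f : truncR p c) * (g : truncR p c) = 0 ↔
          (Ψ f : ZMod (p ^ c)) * (Ψ g : ZMod (p ^ c)) = 0) := by
  haveI : Fact p.Prime := ⟨hp⟩
  haveI : NeZero (p ^ c) := pc_nezero p c
  set e₁ := E1 p c with he₁
  set e₂ := E2 p c with he₂
  have h₁ : ∀ x y : truncR p c, x * y = 0 ↔ ∃ j k, j + k = c ∧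
      (∀ i : Fin c, (i : ℕ) < j → e₁ x i = 0) ∧ (∀ i : Fin c, (i : ℕ) < k → e₁ y i = 0) := by
    intro x y
    rw [trunc_bridge]
    constructor
    · rintro ⟨j, k, hjk, hx, hy⟩
      exact ⟨j, k, hjk, (E1_cond p c x j (by omega)).mp hx, (E1_cond p c y k (by omega)).mp hy⟩
    · rintro ⟨j, k, hjk, hx, hy⟩
      exact ⟨j, k, hjk, (E1_cond p c x j (by omega)).mpr hx, (E1_cond p c y k (by omega)).mpr hy⟩
  have h₂ : ∀ x y : ZMod (p ^ c), x * y = 0 ↔ ∃ j k, j + k = c ∧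
      (∀ i : Fin c, (i : ℕ) < j → e₂ x i = 0) ∧ (∀ i : Fin c, (i : ℕ) < k → e₂ y i = 0) := by
    intro x y
    rw [zmod_bridge]
    constructor
    · rintro ⟨j, k, hjk, hx, hy⟩
      exact ⟨j, k, hjk, (E2_cond p c x j (by omega)).mp hx, (E2_cond p c y k (by omega)).mp hy⟩
    · rintro ⟨j, k, hjk, hx, hy⟩
      exact ⟨j, k, hjk, (E2_cond p c x j (by omega)).mpr hx, (E2_cond p c y k (by omega)).mpr hy⟩
  have z₁ : e₁ 0 = 0 := by
    funext i
    rw [he₁, E1_apply, trep_zero]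
    simp
  have z₂ : e₂ 0 = 0 := by
    funext i
    rw [he₂, E2_apply]
    simp
  have m₁ := mem_nzd_char hc e₁ z₁ h₁
  have m₂ := mem_nzd_char hc e₂ z₂ h₂
  set Φ : truncR p c ≃ ZMod (p ^ c) := e₁.trans e₂.symm with hΦdef
  have hΦ : ∀ x : truncR p c, e₂ (Φ x) = e₁ x := fun x => e₂.apply_symm_apply _
  have hmem : ∀ x : truncR p c, x ∈ nzdSet (truncR p c) ↔ Φ x ∈ nzdSet (ZMod (p ^ c)) := by
    intro x
    rw [m₁, m₂, hΦ]
  refine ⟨Φ.subtypeEquiv hmem, ?_⟩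
  intro f g _
  have hcoe : ∀ x : nzdSet (truncR p c),
      ((Φ.subtypeEquiv hmem) x : ZMod (p ^ c)) = Φ (x : truncR p c) := fun x => rfl
  rw [hcoe, hcoe, h₁, h₂]
  constructor
  · rintro ⟨j, k, hjk, hx, hy⟩
    refine ⟨j, k, hjk, ?_, ?_⟩ <;> intro i hi
    · rw [hΦ]; exact hx i hi
    · rw [hΦ]; exact hy i hi
  · rintro ⟨j, k, hjk, hx, hy⟩
    refine ⟨j, k, hjk, ?_, ?_⟩ <;> intro i hi
    · rw [← hΦ]; exact hx i hi
    · rw [← hΦ]; exact hy i hi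
end
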